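/- arXiv:1511.01763 — 4 statements merged into one kernel-verified Lean document; each statement's English description precedes it below -/
import Mathlib

section
/- Let (Y_{n2})_{n≥0} be a sequence of real random variables with Y_{02} = 0, and let α ∈ (0,∞). Assume E|Y_{n2} − Y_{n−1,2}|^α < ∞ for all n ≥ 1 and limsup_{n→∞} n^{−1} log E|Y_{n2} − Y_{n−1,2}|^α < 0. Then E[(sup_n Y_{n2})_+^α] < ∞ and E[|inf_n Y_{n2}|^α] < ∞, where the sup and inf are over n ∈ ℕ (interpreting both as the sup/inf of the partial sequence, which are finite a.s.). -/
open MeasureTheory Filter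
open scoped ENNReal

lemma aux_tsum_rpow {α : ℝ} (hα : 0 < α) (A w : ℕ → ℝ≥0∞) (hw0 : ∀ k, w k ≠ 0)
    (hwt : ∀ k, w k ≠ ⊤) :
    (∑' k, A k) ^ α ≤ (∑' k, w k) ^ α * ∑' k, (A k) ^ α / (w k) ^ α := by
  set T := ∑' k, (A k) ^ α / (w k) ^ α with hT
  have hT1 : ∀ k, A k / w k ≤ T ^ (1/α) := by
    intro k
    have h1 : (A k / w k) ^ α ≤ T := by
      rw [ENNReal.div_rpow_of_nonneg _ _ hα.le]
      exact ENNReal.le_tsum k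
    calc A k / w k = ((A k / w k) ^ α) ^ (1/α) := by
          rw [← ENNReal.rpow_mul, mul_one_div_cancel hα.ne', ENNReal.rpow_one]
      _ ≤ T ^ (1/α) := ENNReal.rpow_le_rpow h1 (by positivity)
  have hT2 : (∑' k, A k) ≤ T ^ (1/α) * ∑' k, w k := by
    rw [← ENNReal.tsum_mul_left]
    refine ENNReal.tsum_le_tsum fun k => ?_
    calc A k = A k / w k * w k := (ENNReal.div_mul_cancel (hw0 k) (hwt k)).symm
      _ ≤ T ^ (1/α) * w k := mul_le_mul_left (hT1 k) _
  calc (∑' k, A k) ^ α ≤ (T ^ (1/α) * ∑' k, w k) ^ α := ENNReal.rpow_le_rpow hT2 hα.le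
    _ = (T ^ (1/α)) ^ α * (∑' k, w k) ^ α := ENNReal.mul_rpow_of_nonneg _ _ hα.le
    _ = (∑' k, w k) ^ α * T := by
        rw [← ENNReal.rpow_mul, one_div_mul_cancel hα.ne', ENNReal.rpow_one, mul_comm]

lemma aux_pointwise (Y : ℕ → ℝ) (hY0 : Y 0 = 0)
    (hsum : Summable fun k => |Y (k + 1) - Y k|) :
    |⨆ n, Y n| ≤ ∑' k, |Y (k + 1) - Y k| ∧ |⨅ n, Y n| ≤ ∑' k, |Y (k + 1) - Y k| := by
  set S := ∑' k, |Y (k + 1) - Y k| with hS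
  have hS0 : 0 ≤ S := tsum_nonneg fun k => abs_nonneg _
  have hYb : ∀ n, |Y n| ≤ S := by
    intro n
    have ht : Y n = ∑ k ∈ Finset.range n, (Y (k + 1) - Y k) := by
      rw [Finset.sum_range_sub Y, hY0, sub_zero]
    calc |Y n| = |∑ k ∈ Finset.range n, (Y (k + 1) - Y k)| := by rw [← ht]
      _ ≤ ∑ k ∈ Finset.range n, |Y (k + 1) - Y k| := Finset.abs_sum_le_sum_abs _ _
      _ ≤ S := Summable.sum_le_tsum _ (fun k _ => abs_nonneg _) hsum
  have hbdd : BddAbove (Set.range Y) := ⟨S, by rintro x ⟨n, rfl⟩; exact (abs_le.1 (hYb n)).2⟩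
  have hbddb : BddBelow (Set.range Y) := ⟨-S, by rintro x ⟨n, rfl⟩; exact (abs_le.1 (hYb n)).1⟩
  constructor
  · refine abs_le.2 ⟨?_, ciSup_le fun n => (abs_le.1 (hYb n)).2⟩
    calc -S ≤ 0 := neg_nonpos_of_nonneg hS0
      _ = Y 0 := hY0.symm
      _ ≤ ⨆ n, Y n := le_ciSup hbdd 0
  · refine abs_le.2 ⟨le_ciInf fun n => (abs_le.1 (hYb n)).1, ?_⟩
    calc ⨅ n, Y n ≤ Y 0 := ciInf_le hbddb 0
      _ = 0 := hY0
      _ ≤ S := hS0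

lemma aux_limsup (u : ℕ → ℝ) (h : limsup u atTop < 0) :
    ∃ b < (0:ℝ), ∃ N : ℕ, ∀ n ≥ N, u n ≤ b := by
  rw [Filter.limsup_eq] at h
  set s := {a : ℝ | ∀ᶠ n in atTop, u n ≤ a} with hs
  by_cases h1 : s.Nonempty ∧ BddBelow s
  · obtain ⟨a, has, ha0⟩ := (csInf_lt_iff h1.2 h1.1).mp h
    obtain ⟨N, hN⟩ := eventually_atTop.mp has
    exact ⟨a, ha0, N, hN⟩
  · exfalso
    rw [not_and_or] at h1
    rcases h1 with h1 | h1
    · rw [Set.not_nonempty_iff_eq_empty.mp h1, Real.sInf_empty] at h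
      exact absurd h (lt_irrefl 0)
    · rw [Real.sInf_of_not_bddBelow h1] at h
      exact absurd h (lt_irrefl 0)

set_option maxHeartbeats 1600000 in
/-- Lemma 6.5: if the increments of a process `Y` (with `Y 0 = 0`) have α-th
moments decaying exponentially, then the α-th moments of the supremum and of
(the absolute value of) the infimum of the process are finite. -/
theorem moment_sup_inf_finite
    {Ω : Type*} [MeasurableSpace Ω] (P : Measure Ω) [IsProbabilityMeasure P]
    (Y : ℕ → Ω → ℝ) (hY0 : Y 0 = 0) (α : ℝ) (hα : 0 < α)
    (hint : ∀ n : ℕ, Integrable (fun ω => |Y (n + 1) ω - Y n ω| ^ α) P)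
    (hdecay :
      limsup (fun n : ℕ =>
        Real.log (∫ ω, |Y (n + 1) ω - Y n ω| ^ α ∂P) / (n + 1 : ℝ)) atTop < 0) :
    (∫⁻ ω, ENNReal.ofReal (|(⨆ n : ℕ, Y n ω)| ^ α) ∂P) < ⊤ ∧
    (∫⁻ ω, ENNReal.ofReal (|(⨅ n : ℕ, Y n ω)| ^ α) ∂P) < ⊤ := by
  set c : ℕ → ℝ := fun n => ∫ ω, |Y (n + 1) ω - Y n ω| ^ α ∂P with hcdef
  obtain ⟨b, hb0, N, hN⟩ := aux_limsup _ hdecay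
  -- exponential bound on c
  have hcexp : ∀ n ≥ N, c n ≤ Real.exp ((n : ℝ) * b) := by
    intro n hn
    have h1 : (0:ℝ) < (n : ℝ) + 1 := by positivity
    have h2 : Real.log (c n) ≤ b * ((n : ℝ) + 1) := (div_le_iff₀ h1).mp (hN n hn)
    have h3 : b * ((n : ℝ) + 1) ≤ (n : ℝ) * b := by nlinarith
    calc c n ≤ Real.exp (Real.log (c n)) := Real.le_exp_log _
      _ ≤ Real.exp ((n : ℝ) * b) := Real.exp_le_exp.2 (h2.trans h3)
  -- setup
  set A : ℕ → Ω → ℝ≥0∞ := fun k ω => ENNReal.ofReal |Y (k + 1) ω - Y k ω| with hAdef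
  set g : Ω → ℝ≥0∞ := fun ω => ∑' k, A k ω with hgdef
  set w : ℕ → ℝ≥0∞ := fun k => ENNReal.ofReal (Real.exp ((k : ℝ) * (b / (2 * α)))) with hwdef
  have hw0 : ∀ k, w k ≠ 0 := fun k => by
    simp [hwdef, ENNReal.ofReal_eq_zero, not_le, Real.exp_pos]
  have hwt : ∀ k, w k ≠ ⊤ := fun k => ENNReal.ofReal_ne_top
  have hwpow : ∀ k, (w k) ^ α = ENNReal.ofReal (Real.exp ((k : ℝ) * (b / 2))) := by
    intro k
    have hwk : w k = ENNReal.ofReal (Real.exp ((k : ℝ) * (b / (2 * α)))) := rfl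
    rw [hwk, ENNReal.ofReal_rpow_of_nonneg (Real.exp_pos _).le hα.le, ← Real.exp_mul]
    congr 2
    field_simp
  -- the weight sum is finite
  have hW : (∑' k, w k) ≠ ⊤ := by
    have : ∀ k : ℕ, w k = (ENNReal.ofReal (Real.exp (b / (2 * α)))) ^ k := by
      intro k
      have hwk : w k = ENNReal.ofReal (Real.exp ((k : ℝ) * (b / (2 * α)))) := rfl
      rw [hwk, Real.exp_nat_mul, ENNReal.ofReal_pow (Real.exp_pos _).le]
    rw [tsum_congr this, ENNReal.tsum_geometric]
    rw [Ne, ENNReal.inv_eq_top, tsub_eq_zero_iff_le, not_le]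
    have h1 : Real.exp (b / (2 * α)) < 1 :=
      Real.exp_lt_one_iff.mpr (div_neg_of_neg_of_pos hb0 (by positivity))
    calc ENNReal.ofReal (Real.exp (b / (2 * α))) < ENNReal.ofReal 1 :=
          (ENNReal.ofReal_lt_ofReal_iff_of_nonneg (Real.exp_pos _).le).mpr h1
      _ = 1 := ENNReal.ofReal_one
  -- measurability
  have hAmeas : ∀ k, AEMeasurable (fun ω => (A k ω) ^ α) P := by
    intro k
    have : (fun ω => (A k ω) ^ α) = fun ω => ENNReal.ofReal (|Y (k + 1) ω - Y k ω| ^ α) := by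
      funext ω
      rw [hAdef]
      exact ENNReal.ofReal_rpow_of_nonneg (abs_nonneg _) hα.le
    rw [this]
    exact ENNReal.measurable_ofReal.comp_aemeasurable
      (hint k).aestronglyMeasurable.aemeasurable
  have hAk : ∀ k, AEMeasurable (A k) P := by
    intro k
    have : A k = fun ω => ((A k ω) ^ α) ^ (1/α) := by
      funext ω
      rw [← ENNReal.rpow_mul, mul_one_div_cancel hα.ne', ENNReal.rpow_one]
    rw [this]
    exact (hAmeas k).pow aemeasurable_const
  have hgmeas : AEMeasurable g P := AEMeasurable.ennreal_tsum hAk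
  -- lintegral of (A k)^α
  have hAint : ∀ k, ∫⁻ ω, (A k ω) ^ α ∂P = ENNReal.ofReal (c k) := by
    intro k
    have h1 : (fun ω => (A k ω) ^ α) = fun ω => ENNReal.ofReal (|Y (k + 1) ω - Y k ω| ^ α) := by
      funext ω
      exact ENNReal.ofReal_rpow_of_nonneg (abs_nonneg _) hα.le
    rw [h1, hcdef]
    exact (ofReal_integral_eq_lintegral_ofReal (hint k)
      (Filter.Eventually.of_forall fun ω => Real.rpow_nonneg (abs_nonneg _) _)).symm
  -- main integral bound
  set W : ℝ≥0∞ := ∑' k, w k with hWdef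
  have hWα : W ^ α ≠ ⊤ := ENNReal.rpow_ne_top_of_nonneg hα.le hW
  have hint1 : ∫⁻ ω, (g ω) ^ α ∂P ≤ W ^ α * ∑' k, ENNReal.ofReal (c k) / (w k) ^ α := by
    calc ∫⁻ ω, (g ω) ^ α ∂P
        ≤ ∫⁻ ω, W ^ α * ∑' k, (A k ω) ^ α / (w k) ^ α ∂P := by
          refine lintegral_mono fun ω => ?_
          exact aux_tsum_rpow hα (fun k => A k ω) w hw0 hwt
      _ = W ^ α * ∫⁻ ω, ∑' k, (A k ω) ^ α / (w k) ^ α ∂P := lintegral_const_mul' _ _ hWα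
      _ = W ^ α * ∑' k, ∫⁻ ω, (A k ω) ^ α / (w k) ^ α ∂P := by
          rw [lintegral_tsum (f := fun k ω => (A k ω) ^ α / (w k) ^ α) fun k => (hAmeas k).div aemeasurable_const]
      _ = W ^ α * ∑' k, ENNReal.ofReal (c k) / (w k) ^ α := by
          congr 1
          refine tsum_congr fun k => ?_
          have hwk : ((w k) ^ α)⁻¹ ≠ ⊤ := by
            rw [Ne, ENNReal.inv_eq_top, hwpow k]
            simp [ENNReal.ofReal_eq_zero, not_le, Real.exp_pos]
          simp_rw [div_eq_mul_inv]
          rw [lintegral_mul_const' _ _ hwk, hAint k]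
  -- the sum is finite
  have hQ : (∑' k, ENNReal.ofReal (c k) / (w k) ^ α) ≠ ⊤ := by
    set q : ℝ≥0∞ := ENNReal.ofReal (Real.exp (b / 2)) with hq
    have hq0 : ∀ k : ℕ, q ^ k ≠ 0 :=
      fun k => pow_ne_zero _ (by simp [hq, ENNReal.ofReal_eq_zero, not_le, Real.exp_pos])
    have hqt : ∀ k : ℕ, q ^ k ≠ ⊤ := fun k => ENNReal.pow_ne_top ENNReal.ofReal_ne_top
    have hq1 : q < 1 := by
      rw [hq, ← ENNReal.ofReal_one]
      exact (ENNReal.ofReal_lt_ofReal_iff_of_nonneg (Real.exp_pos _).le).mpr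
        (Real.exp_lt_one_iff.mpr (by linarith))
    set t : ℕ → ℝ≥0∞ := fun k => ENNReal.ofReal (c k) / (w k) ^ α with ht
    have htfin : ∀ k, t k ≠ ⊤ := by
      intro k
      refine (ENNReal.div_lt_top ENNReal.ofReal_ne_top ?_).ne
      rw [hwpow k]
      simp [ENNReal.ofReal_eq_zero, not_le, Real.exp_pos]
    have htail : ∀ k ≥ N, t k ≤ q ^ k := by
      intro k hk
      have h1 : c k ≤ Real.exp ((k : ℝ) * (b / 2)) * Real.exp ((k : ℝ) * (b / 2)) := by
        rw [← Real.exp_add]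
        refine (hcexp _ hk).trans (Real.exp_le_exp.2 (le_of_eq (by ring)))
      have h2 : ENNReal.ofReal (c k) ≤
          ENNReal.ofReal (Real.exp ((k : ℝ) * (b / 2))) * (w k) ^ α := by
        rw [hwpow, ← ENNReal.ofReal_mul (Real.exp_pos _).le]
        exact ENNReal.ofReal_le_ofReal h1
      refine (ENNReal.div_le_of_le_mul h2).trans ?_
      rw [Real.exp_nat_mul, ENNReal.ofReal_pow (Real.exp_pos _).le]
    set M : ℝ≥0∞ := 1 ⊔ (Finset.range N).sup (fun k => t k / q ^ k) with hM
    have hMt : M ≠ ⊤ := by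
      have hlt : M < ⊤ := by
        rw [hM]
        refine sup_lt_iff.mpr ⟨ENNReal.one_lt_top, ?_⟩
        refine (Finset.sup_lt_iff (a := (⊤ : ℝ≥0∞))
          (bot_lt_iff_ne_bot.mpr (by simp))).mpr fun k _ => ?_
        exact ENNReal.div_lt_top (htfin k) (hq0 k)
      exact hlt.ne
    have hbound : ∀ k, t k ≤ M * q ^ k := by
      intro k
      rcases lt_or_ge k N with hk | hk
      · have hle : t k / q ^ k ≤ M := by
          rw [hM]
          exact le_sup_of_le_right
            (Finset.le_sup (f := fun k => t k / q ^ k) (Finset.mem_range.mpr hk))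
        calc t k = t k / q ^ k * q ^ k := (ENNReal.div_mul_cancel (hq0 k) (hqt k)).symm
          _ ≤ M * q ^ k := mul_le_mul_left hle _
      · calc t k ≤ q ^ k := htail k hk
          _ = 1 * q ^ k := (one_mul _).symm
          _ ≤ M * q ^ k := mul_le_mul_left le_sup_left _
    refine ne_top_of_le_ne_top ?_
      ((ENNReal.tsum_le_tsum hbound).trans (le_of_eq ENNReal.tsum_mul_left))
    refine ENNReal.mul_ne_top hMt ?_
    rw [ENNReal.tsum_geometric, Ne, ENNReal.inv_eq_top, tsub_eq_zero_iff_le, not_le]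
    exact hq1
  have hG : ∫⁻ ω, (g ω) ^ α ∂P ≠ ⊤ :=
    ne_top_of_le_ne_top (ENNReal.mul_ne_top hWα hQ) hint1
  -- a.e. finiteness of g
  have hgfin : ∀ᵐ ω ∂P, g ω ≠ ⊤ := by
    filter_upwards [ae_lt_top' (hgmeas.pow aemeasurable_const) hG] with ω hω
    intro h
    rw [h, ENNReal.top_rpow_of_pos hα] at hω
    exact absurd hω (lt_irrefl ⊤)
  -- a.e. pointwise bound
  have hfinal : ∀ᵐ ω ∂P, ENNReal.ofReal (|(⨆ n : ℕ, Y n ω)| ^ α) ≤ (g ω) ^ α ∧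
      ENNReal.ofReal (|(⨅ n : ℕ, Y n ω)| ^ α) ≤ (g ω) ^ α := by
    filter_upwards [hgfin] with ω hω
    have hsum : Summable fun k => |Y (k + 1) ω - Y k ω| := by
      have h1 := ENNReal.summable_toReal hω
      refine h1.congr fun k => ?_
      rw [hAdef]
      exact ENNReal.toReal_ofReal (abs_nonneg _)
    have hY0' : (fun n => Y n ω) 0 = 0 := by simp only [hY0, Pi.zero_apply]
    obtain ⟨hsup, hinf⟩ := aux_pointwise (fun n => Y n ω) hY0' hsum
    set S := ∑' k, |Y (k + 1) ω - Y k ω| with hSdef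
    have hS0 : 0 ≤ S := tsum_nonneg fun k => abs_nonneg _
    have hgS : ENNReal.ofReal S = g ω := by
      rw [hgdef, hSdef]
      exact ENNReal.ofReal_tsum_of_nonneg (fun k => abs_nonneg _) hsum
    have key : ∀ x : ℝ, |x| ≤ S → ENNReal.ofReal (|x| ^ α) ≤ (g ω) ^ α := by
      intro x hx
      calc ENNReal.ofReal (|x| ^ α) ≤ ENNReal.ofReal (S ^ α) :=
            ENNReal.ofReal_le_ofReal (Real.rpow_le_rpow (abs_nonneg _) hx hα.le)
        _ = (ENNReal.ofReal S) ^ α := (ENNReal.ofReal_rpow_of_nonneg hS0 hα.le).symm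
        _ = (g ω) ^ α := by rw [hgS]
    exact ⟨key _ hsup, key _ hinf⟩
  constructor
  · refine lt_of_le_of_lt (lintegral_mono_ae (hfinal.mono fun ω h => h.1)) ?_
    exact lt_top_iff_ne_top.2 hG
  · refine lt_of_le_of_lt (lintegral_mono_ae (hfinal.mono fun ω h => h.2)) ?_
    exact lt_top_iff_ne_top.2 hG
end

section
/- Let Z, Z₁, Z₂, … be i.i.d. nonnegative random variables with P(Z > 0) > 0 and moment index ᾱ = sup{α ≥ 0 : E Z^α < ∞} satisfying ᾱ > 1. For ν > 0 let X_ν = Z₁ + ⋯ + Z_{N_ν} where N_ν is Poisson(ν) independent of the Z's. Then for each α ∈ (0, ᾱ), lim_{ν→∞} (log ν)^{−1} log E(X_ν^α) = α. -/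
open MeasureTheory Filter ProbabilityTheory
open scoped ENNReal

private lemma cp_nat_pow_le (n k : ℕ) :
    k ^ n ≤ 2 ^ n * Nat.descFactorial k n + (2 * n) ^ n := by
  rcases le_or_gt k (2 * n) with h | h
  · exact le_add_of_nonneg_of_le (Nat.zero_le _) (Nat.pow_le_pow_left h n)
  · refine le_add_of_le_of_nonneg ?_ (Nat.zero_le _)
    rw [Nat.descFactorial_eq_prod_range]
    calc k ^ n = ∏ _i ∈ Finset.range n, k := by simp
    _ ≤ ∏ i ∈ Finset.range n, 2 * (k - i) := by
        refine Finset.prod_le_prod' ?_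
        intro i hi
        have := Finset.mem_range.1 hi
        omega
    _ = 2 ^ n * ∏ i ∈ Finset.range n, (k - i) := by
        rw [Finset.prod_mul_distrib]; simp

private lemma cp_shift (n : ℕ) : ∀ j : ℕ, ∀ ν : ℝ,
    Real.exp (-ν) * ν ^ (j + n) / (Nat.factorial (j + n)) * (Nat.descFactorial (j + n) n)
      = (Real.exp (-ν) * ν ^ n) * (ν ^ j / Nat.factorial j) := by
  intro j ν
  have hd : (Nat.factorial j : ℝ) * (Nat.descFactorial (j + n) n) = Nat.factorial (j + n) := by
    rw_mod_cast [← Nat.factorial_mul_descFactorial (Nat.le_add_left n j)]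
    simp
  have hfj : (Nat.factorial j : ℝ) ≠ 0 := by positivity
  have hfjn : (Nat.factorial (j + n) : ℝ) ≠ 0 := by positivity
  field_simp
  rw [← hd, pow_add]
  ring

private lemma cp_poisson_summable {ν : ℝ} (n : ℕ) :
    Summable (fun k : ℕ => Real.exp (-ν) * ν ^ k / (Nat.factorial k) * (Nat.descFactorial k n)) := by
  rw [← summable_nat_add_iff n]
  rw [funext (fun j => cp_shift n j ν)]
  exact ((NormedSpace.expSeries_div_summable ν).mul_left _)

private lemma cp_poisson_tsum (ν : ℝ) (n : ℕ) :
    ∑' k : ℕ, Real.exp (-ν) * ν ^ k / (Nat.factorial k) * (Nat.descFactorial k n) = ν ^ n := by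
  rw [← Summable.sum_add_tsum_nat_add n (cp_poisson_summable n (ν := ν))]
  have h0 : ∑ k ∈ Finset.range n,
      Real.exp (-ν) * ν ^ k / (Nat.factorial k) * (Nat.descFactorial k n) = 0 := by
    refine Finset.sum_eq_zero fun k hk => ?_
    rw [Nat.descFactorial_eq_zero_iff_lt.2 (Finset.mem_range.1 hk)]
    simp
  rw [h0, zero_add, funext (fun j => cp_shift n j ν), tsum_mul_left]
  have he : ∑' (x : ℕ), ν ^ x / (Nat.factorial x : ℝ) = Real.exp ν := by
    rw [Real.exp_eq_exp_ℝ]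
    rw [NormedSpace.exp_eq_tsum_div]
  rw [he]
  rw [mul_comm (Real.exp (-ν)) (ν ^ n), mul_assoc, ← Real.exp_add]
  simp

private lemma cp_interp {Ω : Type*} [MeasurableSpace Ω] (μ : Measure Ω) {f : Ω → ℝ≥0∞}
    (hf : AEMeasurable f μ) {r s θ : ℝ} (hr : 0 ≤ r) (hs : 0 ≤ s)
    (hθ0 : 0 < θ) (hθ1 : θ < 1) :
    ∫⁻ ω, f ω ^ (θ * r + (1 - θ) * s) ∂μ ≤
      (∫⁻ ω, f ω ^ r ∂μ) ^ θ * (∫⁻ ω, f ω ^ s ∂μ) ^ (1 - θ) := by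
  have hθ1' : 0 < 1 - θ := by linarith
  have hpq : (1/θ).HolderConjugate (1/(1-θ)) := by
    refine Real.holderConjugate_iff.2 ⟨?_, ?_⟩
    · rw [lt_div_iff₀ hθ0]; linarith
    · rw [one_div, one_div, inv_inv, inv_inv]; ring
  have h1 : ∀ ω, f ω ^ (θ * r + (1 - θ) * s) = f ω ^ (θ * r) * f ω ^ ((1 - θ) * s) := by
    intro ω
    exact ENNReal.rpow_add_of_nonneg _ _ (by positivity) (by positivity)
  calc ∫⁻ ω, f ω ^ (θ * r + (1 - θ) * s) ∂μ
      = ∫⁻ ω, ((fun ω => f ω ^ (θ * r)) * fun ω => f ω ^ ((1 - θ) * s)) ω ∂μ := by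
        simp only [Pi.mul_apply]; exact lintegral_congr h1
    _ ≤ (∫⁻ ω, (f ω ^ (θ * r)) ^ (1/θ) ∂μ) ^ (1/(1/θ)) *
        (∫⁻ ω, (f ω ^ ((1 - θ) * s)) ^ (1/(1-θ)) ∂μ) ^ (1/(1/(1-θ))) :=
        ENNReal.lintegral_mul_le_Lp_mul_Lq μ hpq (hf.pow_const _) (hf.pow_const _)
    _ = (∫⁻ ω, f ω ^ r ∂μ) ^ θ * (∫⁻ ω, f ω ^ s ∂μ) ^ (1 - θ) := by
        rw [one_div_one_div, one_div_one_div]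
        congr 1
        · congr 1
          refine lintegral_congr fun ω => ?_
          rw [← ENNReal.rpow_mul]
          congr 1
          field_simp
        · congr 1
          refine lintegral_congr fun ω => ?_
          rw [← ENNReal.rpow_mul]
          congr 1
          field_simp

private lemma cp_holder_pow {Ω : Type*} [MeasurableSpace Ω] (P : Measure Ω)
    [IsProbabilityMeasure P]
    (f : Ω → ℝ≥0∞) (hf : AEMeasurable f P) (β : ℝ) (n : ℝ) (hβ0 : 0 < β) (hβn : β < n) :
    ∫⁻ ω, f ω ^ β ∂P ≤ (∫⁻ ω, f ω ^ n ∂P) ^ (β / n) := by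
  have hn0 : 0 < n := lt_trans hβ0 hβn
  have hpq : (n/β).HolderConjugate ((n/β)/(n/β - 1)) := by
    refine Real.HolderConjugate.conjExponent ?_
    rw [lt_div_iff₀ hβ0]; linarith
  have h := ENNReal.lintegral_mul_le_Lp_mul_Lq P hpq
    ((hf.pow_const β)) (aemeasurable_const (b := (1:ℝ≥0∞)))
  simp only [Pi.mul_apply, mul_one, ENNReal.one_rpow, lintegral_one, measure_univ,
    one_mul] at h
  have h2 : ∀ ω, (f ω ^ β) ^ (n/β) = f ω ^ n := by
    intro ω
    rw [← ENNReal.rpow_mul]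
    congr 1
    field_simp
  rw [lintegral_congr h2] at h
  rwa [one_div, inv_div] at h

private lemma cp_bounds (α β : ℝ) (hα0 : 0 < α) (hαβ : α < β) (hβ1 : 1 < β)
    (m' A : ℝ≥0∞) (hm0 : m' ≠ 0) (hmt : m' ≠ ⊤) (hA0 : A ≠ 0) (hAt : A ≠ ⊤) :
    ∃ c C : ℝ≥0∞, c ≠ 0 ∧ c ≠ ⊤ ∧ C ≠ 0 ∧ C ≠ ⊤ ∧
      ∀ (J : ℝ → ℝ≥0∞) (ν' : ℝ≥0∞), ν' ≠ 0 → ν' ≠ ⊤ →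
        J 1 = m' * ν' → J β ≤ A * ν' ^ β → J 0 = 1 →
        (∀ r s θ : ℝ, 0 ≤ r → 0 ≤ s → 0 < θ → θ < 1 →
          J (θ*r + (1-θ)*s) ≤ (J r)^θ * (J s)^(1-θ)) →
        c * ν' ^ α ≤ J α ∧ J α ≤ C * ν' ^ α := by
  rcases lt_trichotomy α 1 with hα1 | hα1 | hα1
  · -- α < 1
    set θ : ℝ := (β-1)/(β-α) with hθ
    have hβα : (0:ℝ) < β - α := by linarith
    have hθ0 : 0 < θ := div_pos (by linarith) hβα
    have hθ1 : θ < 1 := by rw [hθ, div_lt_one hβα]; linarith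
    have hβα' : β - α ≠ 0 := hβα.ne'
    have hθc : θ * α + (1 - θ) * β = 1 := by rw [hθ]; field_simp; ring
    have hAθt : A ^ (1-θ) ≠ ⊤ := ENNReal.rpow_ne_top_of_nonneg (by linarith) hAt
    have hAθ0 : A ^ (1-θ) ≠ 0 := by
      simp [ENNReal.rpow_eq_zero_iff, hA0, hAt]
    set c : ℝ≥0∞ := (m' * (A ^ (1-θ))⁻¹) ^ (1/θ) with hc
    have hbase0 : m' * (A ^ (1-θ))⁻¹ ≠ 0 := by
      simp [hm0, hAθt]
    have hbaset : m' * (A ^ (1-θ))⁻¹ ≠ ⊤ := by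
      simp [ENNReal.mul_eq_top, hm0, hmt, hAθ0]
    have hc0 : c ≠ 0 := by
      simp [hc, ENNReal.rpow_eq_zero_iff, hbase0, hbaset]
    have hct : c ≠ ⊤ := ENNReal.rpow_ne_top_of_nonneg (by positivity) hbaset
    refine ⟨c, m' ^ α, hc0, hct, by simp [ENNReal.rpow_eq_zero_iff, hm0, hmt],
      ENNReal.rpow_ne_top_of_nonneg hα0.le hmt, ?_⟩
    intro J ν' hν0 hνt hJ1 hJβ hJ0 hint
    constructor
    · have h1 : J 1 ≤ (J α)^θ * (J β)^(1-θ) := by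
        have := hint α β θ hα0.le (by linarith) hθ0 hθ1
        rwa [hθc] at this
      set E : ℝ≥0∞ := (A * ν' ^ β) ^ (1-θ) with hE
      have hνβt : ν' ^ β ≠ ⊤ := ENNReal.rpow_ne_top_of_nonneg (by linarith) hνt
      have hνβ0 : ν' ^ β ≠ 0 := by simp [ENNReal.rpow_eq_zero_iff, hν0, hνt]
      have hE0 : E ≠ 0 := by
        simp [hE, ENNReal.rpow_eq_zero_iff, ENNReal.mul_eq_top, hA0, hAt, hν0, hνt, hνβ0, hνβt]
      have hEt : E ≠ ⊤ := ENNReal.rpow_ne_top_of_nonneg (by linarith)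
        (by simp [ENNReal.mul_eq_top, hAt, hνβt])
      have h2 : m' * ν' ≤ (J α)^θ * E := by
        rw [← hJ1]
        refine le_trans h1 (mul_le_mul_right ?_ _)
        exact ENNReal.rpow_le_rpow hJβ (by linarith)
      have hkey : (c * ν' ^ α) ^ θ * E = m' * ν' := by
        rw [ENNReal.mul_rpow_of_nonneg _ _ hθ0.le, hc, ← ENNReal.rpow_mul,
          one_div, inv_mul_cancel₀ hθ0.ne', ENNReal.rpow_one, hE,
          ENNReal.mul_rpow_of_nonneg _ _ (by linarith : (0:ℝ) ≤ 1-θ),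
          ← ENNReal.rpow_mul, ← ENNReal.rpow_mul]
        calc m' * (A ^ (1-θ))⁻¹ * ν' ^ (α * θ) * (A ^ (1-θ) * ν' ^ (β * (1-θ)))
            = m' * ((A ^ (1-θ))⁻¹ * A ^ (1-θ)) * (ν' ^ (α*θ) * ν' ^ (β*(1-θ))) := by ring
          _ = m' * ν' := by
              rw [ENNReal.inv_mul_cancel hAθ0 hAθt, mul_one,
                ← ENNReal.rpow_add _ _ hν0 hνt]
              congr 1
              rw [show α*θ + β*(1-θ) = θ*α + (1-θ)*β by ring, hθc, ENNReal.rpow_one]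
      have h3 : (c * ν' ^ α) ^ θ * E ≤ (J α)^θ * E := by
        rw [hkey]; exact h2
      have h4 : (c * ν' ^ α) ^ θ ≤ (J α)^θ :=
        (ENNReal.mul_le_mul_iff_left hE0 hEt).1 h3
      have h5 := ENNReal.rpow_le_rpow h4 (by positivity : (0:ℝ) ≤ 1/θ)
      rwa [← ENNReal.rpow_mul, ← ENNReal.rpow_mul, mul_one_div, div_self hθ0.ne',
        ENNReal.rpow_one, ENNReal.rpow_one] at h5
    · have h1 : J α ≤ (J 1)^α * (J 0)^(1-α) := by
        have := hint 1 0 α zero_le_one le_rfl hα0 hα1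
        simpa using this
      rw [hJ1, hJ0, ENNReal.one_rpow, mul_one,
        ENNReal.mul_rpow_of_nonneg _ _ hα0.le] at h1
      exact h1
  · subst hα1
    refine ⟨m', m', hm0, hmt, hm0, hmt, ?_⟩
    intro J ν' hν0 hνt hJ1 hJβ hJ0 hint
    rw [ENNReal.rpow_one, hJ1]
    exact ⟨le_rfl, le_rfl⟩
  · set θ' : ℝ := (β-α)/(β-1) with hθ'
    have hθ'0 : 0 < θ' := by
      apply div_pos <;> linarith
    have hθ'1 : θ' < 1 := by rw [hθ', div_lt_one (by linarith)]; linarith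
    have hβ1' : β - 1 ≠ 0 := by linarith
    have hθ'c : θ' * 1 + (1 - θ') * β = α := by rw [hθ']; field_simp; ring
    refine ⟨m' ^ α, m' ^ θ' * A ^ (1-θ'),
      by simp [ENNReal.rpow_eq_zero_iff, hm0, hmt],
      ENNReal.rpow_ne_top_of_nonneg hα0.le hmt,
      by simp [ENNReal.mul_eq_top, ENNReal.rpow_eq_zero_iff, hm0, hmt, hA0, hAt,
        ENNReal.rpow_eq_top_iff],
      by simp [ENNReal.mul_eq_top, ENNReal.rpow_eq_zero_iff, hm0, hmt, hA0, hAt,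
        ENNReal.rpow_eq_top_iff], ?_⟩
    intro J ν' hν0 hνt hJ1 hJβ hJ0 hint
    constructor
    · have h1 : J 1 ≤ (J α)^(1/α) * (J 0)^(1-1/α) := by
        have := hint α 0 (1/α) hα0.le le_rfl (by positivity) (by
          rw [div_lt_one hα0]; linarith)
        have he : (1/α) * α + (1 - 1/α) * 0 = 1 := by field_simp; ring
        rwa [he] at this
      rw [hJ0, ENNReal.one_rpow, mul_one, hJ1] at h1
      have h2 := ENNReal.rpow_le_rpow h1 hα0.le
      rwa [← ENNReal.rpow_mul, one_div, inv_mul_cancel₀ hα0.ne', ENNReal.rpow_one,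
        ENNReal.mul_rpow_of_nonneg _ _ hα0.le] at h2
    · have h1 : J α ≤ (J 1)^θ' * (J β)^(1-θ') := by
        have := hint 1 β θ' zero_le_one (by linarith) hθ'0 hθ'1
        rwa [hθ'c] at this
      rw [hJ1] at h1
      refine le_trans h1 ?_
      have h2 : (J β)^(1-θ') ≤ (A * ν' ^ β)^(1-θ') :=
        ENNReal.rpow_le_rpow hJβ (by linarith)
      refine le_trans (mul_le_mul_right h2 _) (le_of_eq ?_)
      rw [ENNReal.mul_rpow_of_nonneg _ _ hθ'0.le,
        ENNReal.mul_rpow_of_nonneg _ _ (by linarith : (0:ℝ) ≤ 1-θ'),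
        ← ENNReal.rpow_mul]
      calc m' ^ θ' * ν' ^ θ' * (A ^ (1-θ') * ν' ^ (β * (1-θ')))
          = m' ^ θ' * A ^ (1-θ') * (ν' ^ θ' * ν' ^ (β * (1-θ'))) := by ring
        _ = m' ^ θ' * A ^ (1-θ') * ν' ^ α := by
            rw [← ENNReal.rpow_add _ _ hν0 hνt]
            congr 1
            rw [show θ' + β*(1-θ') = θ'*1 + (1-θ')*β by ring, hθ'c]

private lemma cp_limit (ψ : ℝ → ℝ) (α c C : ℝ) (hc : 0 < c)
    (h : ∀ ν : ℝ, 1 ≤ ν → c * ν ^ α ≤ ψ ν ∧ ψ ν ≤ C * ν ^ α) :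
    Tendsto (fun ν => Real.log (ψ ν) / Real.log ν) atTop (nhds α) := by
  have hC : 0 < C := by
    have h1 := h 1 le_rfl
    have : c * (1:ℝ) ^ α ≤ C * (1:ℝ) ^ α := le_trans h1.1 h1.2
    rw [Real.one_rpow] at this
    nlinarith
  have hlow : Tendsto (fun ν : ℝ => Real.log c / Real.log ν + α) atTop (nhds α) := by
    have : Tendsto (fun ν : ℝ => Real.log c / Real.log ν) atTop (nhds 0) :=
      Tendsto.div_atTop tendsto_const_nhds Real.tendsto_log_atTop
    simpa using this.add tendsto_const_nhds
  have hhigh : Tendsto (fun ν : ℝ => Real.log C / Real.log ν + α) atTop (nhds α) := by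
    have : Tendsto (fun ν : ℝ => Real.log C / Real.log ν) atTop (nhds 0) :=
      Tendsto.div_atTop tendsto_const_nhds Real.tendsto_log_atTop
    simpa using this.add tendsto_const_nhds
  refine tendsto_of_tendsto_of_tendsto_of_le_of_le' hlow hhigh ?_ ?_
  · filter_upwards [eventually_ge_atTop (2:ℝ)] with ν hν
    have hν1 : (1:ℝ) < ν := by linarith
    have hlogν : 0 < Real.log ν := Real.log_pos hν1
    have hνα : (0:ℝ) < ν ^ α := Real.rpow_pos_of_pos (by linarith) α
    rw [div_add' _ _ _ hlogν.ne', div_le_div_iff_of_pos_right hlogν]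
    have hlog : Real.log (c * ν ^ α) ≤ Real.log (ψ ν) :=
      Real.log_le_log (by positivity) (h ν (by linarith)).1
    rwa [Real.log_mul hc.ne' hνα.ne', Real.log_rpow (by linarith)] at hlog
  · filter_upwards [eventually_ge_atTop (2:ℝ)] with ν hν
    have hν1 : (1:ℝ) < ν := by linarith
    have hlogν : 0 < Real.log ν := Real.log_pos hν1
    have hνα : (0:ℝ) < ν ^ α := Real.rpow_pos_of_pos (by linarith) α
    have hψ : 0 < ψ ν := lt_of_lt_of_le (by positivity) (h ν (by linarith)).1
    rw [div_add' _ _ _ hlogν.ne', div_le_div_iff_of_pos_right hlogν]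
    have hlog : Real.log (ψ ν) ≤ Real.log (C * ν ^ α) :=
      Real.log_le_log hψ (h ν (by linarith)).2
    rwa [Real.log_mul hC.ne' hνα.ne', Real.log_rpow (by linarith)] at hlog

/-- Lemma 6.1 (first part): for i.i.d. nonnegative claims `Z` with moment index
`ᾱ > 1` and `X ν` a compound Poisson sum with intensity `ν`, one has
`(log ν)⁻¹ log E(X_ν^α) → α` as `ν → ∞`, for every `α ∈ (0, ᾱ)`. -/
theorem compound_poisson_moment_asymptotics
    {Ω : Type*} [MeasurableSpace Ω] (P : Measure Ω) [IsProbabilityMeasure P]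
    (Z : ℕ → Ω → ℝ) (hZmeas : ∀ j, Measurable (Z j))
    (hZindep : iIndepFun Z P)
    (hZident : ∀ j, Measure.map (Z j) P = Measure.map (Z 0) P)
    (hZnonneg : ∀ j, ∀ ω, 0 ≤ Z j ω)
    (hZpos : 0 < P {ω | 0 < Z 0 ω})
    (αbar : ℝ)
    (hαbar : αbar = sSup {α : ℝ | 0 ≤ α ∧ Integrable (fun ω => Z 0 ω ^ α) P})
    (hαbar1 : 1 < αbar)
    (N : ℝ → Ω → ℕ) (hNmeas : ∀ ν, Measurable (N ν))
    (hNpoisson : ∀ ν : ℝ, 0 < ν → ∀ k : ℕ,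
      P {ω | N ν ω = k} =
        ENNReal.ofReal (Real.exp (-ν) * ν ^ k / (Nat.factorial k)))
    (hNindep : ∀ ν : ℝ, 0 < ν → IndepFun (N ν) (fun ω => fun j => Z j ω) P)
    (α : ℝ) (hα0 : 0 < α) (hααbar : α < αbar) :
    Tendsto (fun ν : ℝ =>
        Real.log (∫ ω, (∑ j ∈ Finset.range (N ν ω), Z j ω) ^ α ∂P) / Real.log ν)
      atTop (nhds α) := by
  classical
  -- ## Setup: choice of β, basic moment facts about Z
  set S : Set ℝ := {α : ℝ | 0 ≤ α ∧ Integrable (fun ω => Z 0 ω ^ α) P} with hSdef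
  have hdown : ∀ a ∈ S, ∀ b : ℝ, 0 ≤ b → b ≤ a → b ∈ S := by
    rintro a ⟨ha0, haI⟩ b hb0 hba
    refine ⟨hb0, ?_⟩
    refine (Integrable.add (integrable_const (1:ℝ)) haI).mono
      (((hZmeas 0).pow_const b).aestronglyMeasurable) (ae_of_all _ fun ω => ?_)
    have hz := hZnonneg 0 ω
    rw [Real.norm_eq_abs, abs_of_nonneg (Real.rpow_nonneg hz b)]
    rw [Real.norm_eq_abs]
    rcases le_or_gt (Z 0 ω) 1 with h1 | h1
    · have h3 : Z 0 ω ^ b ≤ 1 := Real.rpow_le_one hz h1 hb0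
      have h2 : (0:ℝ) ≤ Z 0 ω ^ a := Real.rpow_nonneg hz a
      calc Z 0 ω ^ b ≤ 1 := h3
        _ ≤ |1 + Z 0 ω ^ a| := by rw [abs_of_nonneg (by linarith)]; linarith
    · have h3 : Z 0 ω ^ b ≤ Z 0 ω ^ a := Real.rpow_le_rpow_of_exponent_le h1.le hba
      have h2 : (0:ℝ) ≤ Z 0 ω ^ a := Real.rpow_nonneg hz a
      calc Z 0 ω ^ b ≤ Z 0 ω ^ a := h3
        _ ≤ |1 + Z 0 ω ^ a| := by rw [abs_of_nonneg (by linarith)]; linarith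
  have hS0 : (0:ℝ) ∈ S := by
    refine ⟨le_refl 0, ?_⟩
    simp only [Real.rpow_zero]
    exact integrable_const 1
  have hbdd : BddAbove S := by
    by_contra hb
    rw [Real.sSup_of_not_bddAbove hb] at hαbar
    linarith [hαbar ▸ hαbar1]
  obtain ⟨β, hβS, hβgt⟩ : ∃ β ∈ S, max α 1 < β := by
    apply exists_lt_of_lt_csSup ⟨0, hS0⟩
    rw [← hαbar]
    exact max_lt hααbar hαbar1
  have hβα : α < β := lt_of_le_of_lt (le_max_left _ _) hβgt
  have hβ1 : 1 < β := lt_of_le_of_lt (le_max_right _ _) hβgt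
  have hZ1 : Integrable (Z 0) P := by
    have h := (hdown β hβS 1 zero_le_one hβ1.le).2
    simpa [Real.rpow_one] using h
  have hZβ : Integrable (fun ω => Z 0 ω ^ β) P := hβS.2
  have hm : 0 < ∫ ω, Z 0 ω ∂P := by
    rw [integral_pos_iff_support_of_nonneg (fun ω => hZnonneg 0 ω) hZ1]
    refine lt_of_lt_of_le hZpos (measure_mono ?_)
    intro ω hω
    exact ne_of_gt hω
  have hMβr : 0 < ∫ ω, Z 0 ω ^ β ∂P := by
    rw [integral_pos_iff_support_of_nonneg (fun ω => Real.rpow_nonneg (hZnonneg 0 ω) β) hZβ]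
    refine lt_of_lt_of_le hZpos (measure_mono ?_)
    intro ω hω
    exact ne_of_gt (Real.rpow_pos_of_pos hω β)
  -- ## ENNReal-valued versions
  set Y : ℕ → Ω → ℝ≥0∞ := fun j ω => ENNReal.ofReal (Z j ω) with hY
  have hYmeas : ∀ j, Measurable (Y j) := fun j => (hZmeas j).ennreal_ofReal
  set S' : ℕ → Ω → ℝ≥0∞ := fun k ω => ∑ j ∈ Finset.range k, Y j ω with hS'
  have hS'meas : ∀ k, Measurable (S' k) := fun k =>
    Finset.measurable_sum _ (fun j _ => hYmeas j)
  set m' : ℝ≥0∞ := ∫⁻ ω, Y 0 ω ∂P with hm'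
  have hm'eq : m' = ENNReal.ofReal (∫ ω, Z 0 ω ∂P) :=
    (ofReal_integral_eq_lintegral_ofReal hZ1 (ae_of_all _ fun ω => hZnonneg 0 ω)).symm
  have hm'0 : m' ≠ 0 := by
    rw [hm'eq]
    simp only [ne_eq, ENNReal.ofReal_eq_zero, not_le]
    exact hm
  have hm't : m' ≠ ⊤ := by rw [hm'eq]; exact ENNReal.ofReal_ne_top
  set Mβ : ℝ≥0∞ := ∫⁻ ω, Y 0 ω ^ β ∂P with hMβ
  have hMβeq : Mβ = ENNReal.ofReal (∫ ω, Z 0 ω ^ β ∂P) := by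
    rw [hMβ, ofReal_integral_eq_lintegral_ofReal hZβ
      (ae_of_all _ fun ω => Real.rpow_nonneg (hZnonneg 0 ω) β)]
    refine lintegral_congr fun ω => ?_
    rw [ENNReal.ofReal_rpow_of_nonneg (hZnonneg 0 ω) (by linarith)]
  have hMβ0 : Mβ ≠ 0 := by
    rw [hMβeq]
    simp only [ne_eq, ENNReal.ofReal_eq_zero, not_le]
    exact hMβr
  have hMβt : Mβ ≠ ⊤ := by rw [hMβeq]; exact ENNReal.ofReal_ne_top
  -- identical distribution
  have hident : ∀ (g : ℝ → ℝ≥0∞), Measurable g → ∀ j,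
      ∫⁻ ω, g (Z j ω) ∂P = ∫⁻ ω, g (Z 0 ω) ∂P := by
    intro g hg j
    rw [← lintegral_map hg (hZmeas j), ← lintegral_map hg (hZmeas 0), hZident j]
  -- moments of partial sums
  have hJ1 : ∀ k : ℕ, ∫⁻ ω, S' k ω ∂P = k * m' := by
    intro k
    rw [hS']
    simp only
    rw [lintegral_finset_sum _ (fun j _ => hYmeas j)]
    rw [Finset.sum_congr rfl (fun j _ => hident (fun x => ENNReal.ofReal x)
      ENNReal.measurable_ofReal j)]
    simp [Finset.sum_const, hm']; rfl
  have hJβ : ∀ k : ℕ, ∫⁻ ω, S' k ω ^ β ∂P ≤ (k:ℝ≥0∞) ^ β * Mβ := by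
    intro k
    rcases Nat.eq_zero_or_pos k with hk | hk
    · subst hk
      simp only [hS', Finset.range_zero, Finset.sum_empty]
      rw [ENNReal.zero_rpow_of_pos (by linarith)]
      simp
    have hk0 : (k:ℝ≥0∞) ≠ 0 := Nat.cast_ne_zero.2 hk.ne'
    have hkt : (k:ℝ≥0∞) ≠ ⊤ := ENNReal.natCast_ne_top k
    have hptwise : ∀ ω, S' k ω ^ β
        ≤ (k:ℝ≥0∞) ^ β * ((k:ℝ≥0∞)⁻¹ * ∑ j ∈ Finset.range k, Y j ω ^ β) := by
      intro ω
      have hw : ∑ _j ∈ Finset.range k, (k:ℝ≥0∞)⁻¹ = 1 := by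
        rw [Finset.sum_const, Finset.card_range, nsmul_eq_mul, ENNReal.mul_inv_cancel hk0 hkt]
      have hmean := ENNReal.rpow_arith_mean_le_arith_mean_rpow (Finset.range k)
        (fun _ => (k:ℝ≥0∞)⁻¹) (fun j => Y j ω) hw hβ1.le
      have hls : ∑ j ∈ Finset.range k, (k:ℝ≥0∞)⁻¹ * Y j ω = (k:ℝ≥0∞)⁻¹ * S' k ω := by
        rw [hS', Finset.mul_sum]
      rw [hls] at hmean
      have hmul : ((k:ℝ≥0∞)⁻¹ * S' k ω) ^ β = (k:ℝ≥0∞)⁻¹ ^ β * S' k ω ^ β :=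
        ENNReal.mul_rpow_of_nonneg _ _ (by linarith)
      rw [hmul] at hmean
      calc S' k ω ^ β = (k:ℝ≥0∞) ^ β * ((k:ℝ≥0∞)⁻¹ ^ β * S' k ω ^ β) := by
            rw [← mul_assoc, ← ENNReal.mul_rpow_of_nonneg _ _ (by linarith : (0:ℝ) ≤ β),
              ENNReal.mul_inv_cancel hk0 hkt, ENNReal.one_rpow, one_mul]
        _ ≤ (k:ℝ≥0∞) ^ β * ((k:ℝ≥0∞)⁻¹ * ∑ j ∈ Finset.range k, Y j ω ^ β) := by
            refine mul_le_mul_right (le_trans hmean (le_of_eq ?_)) _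
            rw [Finset.mul_sum]
    calc ∫⁻ ω, S' k ω ^ β ∂P
        ≤ ∫⁻ ω, (k:ℝ≥0∞) ^ β * ((k:ℝ≥0∞)⁻¹ * ∑ j ∈ Finset.range k, Y j ω ^ β) ∂P :=
          lintegral_mono fun ω => hptwise ω
      _ = (k:ℝ≥0∞) ^ β * ((k:ℝ≥0∞)⁻¹ * ∑ j ∈ Finset.range k, ∫⁻ ω, Y j ω ^ β ∂P) := by
          rw [lintegral_const_mul _ (by
            exact ((Finset.measurable_sum _ (fun j _ => (hYmeas j).pow_const β)).const_mul _)),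
            lintegral_const_mul _ (Finset.measurable_sum _ (fun j _ => (hYmeas j).pow_const β)),
            lintegral_finset_sum _ (fun j _ => (hYmeas j).pow_const β)]
      _ = (k:ℝ≥0∞) ^ β * Mβ := by
          rw [Finset.sum_congr rfl (fun j _ => hident
            (fun x => ENNReal.ofReal x ^ β) (ENNReal.measurable_ofReal.pow_const β) j)]
          rw [Finset.sum_const, Finset.card_range, nsmul_eq_mul]
          rw [← mul_assoc ((k:ℝ≥0∞)⁻¹), ENNReal.inv_mul_cancel hk0 hkt, one_mul]
  -- ## constants for the Poisson moment bound
  set n : ℕ := ⌊β⌋₊ + 1 with hn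
  have hβn : β < n := by exact_mod_cast Nat.lt_floor_add_one β
  set Cn : ℝ≥0∞ := (2:ℝ≥0∞) ^ n + (2*n) ^ n with hCn
  have hCn0 : Cn ≠ 0 := by
    rw [hCn]
    intro h
    rw [add_eq_zero] at h
    exact (pow_ne_zero n (by norm_num : (2:ℝ≥0∞) ≠ 0)) h.1
  have hCnt : Cn ≠ ⊤ := by
    rw [hCn]
    refine ENNReal.add_ne_top.2 ⟨?_, ?_⟩
    · exact ENNReal.pow_ne_top (by norm_num)
    · exact ENNReal.pow_ne_top (by
        refine ENNReal.mul_ne_top (by norm_num) (ENNReal.natCast_ne_top n))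
  set A : ℝ≥0∞ := Cn ^ ((β : ℝ) / n) * Mβ with hA
  have hA0 : A ≠ 0 := by
    rw [hA]
    simp [ENNReal.rpow_eq_zero_iff, hCn0, hCnt, hMβ0]
  have hAt : A ≠ ⊤ := by
    rw [hA]
    exact ENNReal.mul_ne_top (ENNReal.rpow_ne_top_of_nonneg (by positivity) hCnt) hMβt
  -- ## the interpolation constants
  obtain ⟨c, C, hc0, hct, hC0, hCt, hcC⟩ :=
    cp_bounds α β hα0 hβα hβ1 m' A hm'0 hm't hA0 hAt
  -- ## per-ν work
  set I : ℝ → ℝ → ℝ≥0∞ :=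
    fun ν p => ∫⁻ ω, (∑ j ∈ Finset.range (N ν ω), Y j ω) ^ p ∂P with hI
  have hper : ∀ ν : ℝ, 1 ≤ ν →
      c * ENNReal.ofReal ν ^ α ≤ I ν α ∧ I ν α ≤ C * ENNReal.ofReal ν ^ α := by
    intro ν hν1
    have hν0 : (0:ℝ) < ν := by linarith
    set X' : Ω → ℝ≥0∞ := fun ω => S' (N ν ω) ω with hX'
    have hX'meas : Measurable X' := by
      have h : Measurable (fun q : Ω × ℕ => S' q.2 q.1) :=
        measurable_from_prod_countable_left (fun k => hS'meas k)
      exact h.comp (measurable_id.prodMk (hNmeas ν))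
    have hIX : ∀ p : ℝ, I ν p = ∫⁻ ω, X' ω ^ p ∂P := fun p => rfl
    -- partition + independence
    have key : ∀ p : ℝ, I ν p = ∑' k : ℕ, P {ω | N ν ω = k} * ∫⁻ ω, S' k ω ^ p ∂P := by
      intro p
      rw [hIX]
      have hpart : ∫⁻ ω, X' ω ^ p ∂P
          = ∑' k : ℕ, ∫⁻ ω in {ω | N ν ω = k}, X' ω ^ p ∂P := by
        have hu : (⋃ k : ℕ, {ω | N ν ω = k}) = Set.univ := by
          ext ω; simp
        rw [← setLIntegral_univ, ← hu]
        exact lintegral_iUnion (fun k => (hNmeas ν) (measurableSet_singleton k))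
          (fun k l hkl => Set.disjoint_left.2 fun ω h1 h2 => hkl (h1.symm.trans h2)) _
      rw [hpart]
      refine tsum_congr fun k => ?_
      have hcongr : ∫⁻ ω in {ω | N ν ω = k}, X' ω ^ p ∂P
          = ∫⁻ ω in {ω | N ν ω = k}, S' k ω ^ p ∂P := by
        refine setLIntegral_congr_fun_ae ((hNmeas ν) (measurableSet_singleton k)) ?_
        exact ae_of_all _ (fun ω hω => by rw [hX']; simp only; rw [hω])
      rw [hcongr]
      have hset : MeasurableSet {ω | N ν ω = k} := (hNmeas ν) (measurableSet_singleton k)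
      rw [← lintegral_indicator hset]
      have hrw : ∀ ω, Set.indicator {ω | N ν ω = k} (fun ω => S' k ω ^ p) ω
          = ((fun m : ℕ => Set.indicator ({k} : Set ℕ) (fun _ => (1:ℝ≥0∞)) m) ∘ (N ν)) ω *
            ((fun v : ℕ → ℝ => (∑ j ∈ Finset.range k, ENNReal.ofReal (v j)) ^ p) ∘
              (fun ω => fun j => Z j ω)) ω := by
        intro ω
        by_cases h : N ν ω = k
        · simp [Set.indicator, h, hS', hY]
        · simp [Set.indicator, h, hS', hY]
      rw [lintegral_congr hrw]
      rw [lintegral_mul_eq_lintegral_mul_lintegral_of_indepFun''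
        ((measurable_from_top.comp (hNmeas ν)).aemeasurable)
        (((Finset.measurable_sum _ (fun j _ => (measurable_pi_apply j).ennreal_ofReal)).pow_const p
          |>.comp (measurable_pi_lambda _ (fun j => hZmeas j))).aemeasurable)
        ((hNindep ν hν0).comp measurable_from_top
          ((Finset.measurable_sum _ (fun j _ => (measurable_pi_apply j).ennreal_ofReal)).pow_const p))]
      congr 1
      have hind : ((fun m : ℕ => Set.indicator ({k} : Set ℕ) (fun _ => (1:ℝ≥0∞)) m) ∘ (N ν))
          = Set.indicator {ω | N ν ω = k} (fun _ => (1:ℝ≥0∞)) := by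
        ext ω
        by_cases h : N ν ω = k <;> simp [Set.indicator, h]
      rw [hind]
      exact lintegral_indicator_one hset
    -- moments of N
    have hNc : ∀ cc : ℝ, ∫⁻ ω, (N ν ω : ℝ≥0∞) ^ cc ∂P
        = ∑' k : ℕ, P {ω | N ν ω = k} * (k : ℝ≥0∞) ^ cc := by
      intro cc
      have hf : Measurable (fun k : ℕ => (k : ℝ≥0∞) ^ cc) := measurable_from_top
      rw [← lintegral_map hf (hNmeas ν), lintegral_countable' _]
      refine tsum_congr fun k => ?_
      rw [Measure.map_apply (hNmeas ν) (measurableSet_singleton k), mul_comm]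
      rfl
    have hPS : ∀ nn : ℕ, ∑' k : ℕ, P {ω | N ν ω = k} * (Nat.descFactorial k nn : ℝ≥0∞)
        = ENNReal.ofReal (ν ^ nn) := by
      intro nn
      have h1 : ∀ k : ℕ, P {ω | N ν ω = k} * (Nat.descFactorial k nn : ℝ≥0∞)
          = ENNReal.ofReal
            (Real.exp (-ν) * ν ^ k / (Nat.factorial k) * (Nat.descFactorial k nn)) := by
        intro k
        rw [hNpoisson ν hν0 k, ← ENNReal.ofReal_natCast (Nat.descFactorial k nn),
          ← ENNReal.ofReal_mul (by positivity)]
      rw [funext h1, ← cp_poisson_tsum ν nn]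
      exact (ENNReal.ofReal_tsum_of_nonneg (fun k => by positivity)
        (cp_poisson_summable nn)).symm
    have hsum1 : ∑' k : ℕ, P {ω | N ν ω = k} = 1 := by
      have h := hNc 0
      simp only [ENNReal.rpow_zero, mul_one, lintegral_one, measure_univ] at h
      exact h.symm
    -- I ν 1 = m' * ν
    have hI1 : I ν 1 = m' * ENNReal.ofReal ν := by
      rw [key 1]
      have h1 : ∀ k : ℕ, ∫⁻ ω, S' k ω ^ (1:ℝ) ∂P = (k:ℝ≥0∞) * m' := by
        intro k
        rw [← hJ1 k]
        exact lintegral_congr fun ω => ENNReal.rpow_one _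
      rw [funext fun k => congrArg (P {ω | N ν ω = k} * ·) (h1 k)]
      calc ∑' k : ℕ, P {ω | N ν ω = k} * ((k:ℝ≥0∞) * m')
          = (∑' k : ℕ, P {ω | N ν ω = k} * (k:ℝ≥0∞)) * m' := by
            rw [← ENNReal.tsum_mul_right]
            exact tsum_congr fun k => by ring
        _ = m' * ENNReal.ofReal ν := by
            have h2 := hPS 1
            simp only [Nat.descFactorial_one, pow_one] at h2
            rw [h2, mul_comm]
    -- I ν 0 = 1
    have hI0 : I ν 0 = 1 := by
      rw [hIX]
      simp [ENNReal.rpow_zero]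
    -- I ν β bound
    have hIβ : I ν β ≤ A * ENNReal.ofReal ν ^ β := by
      have hNβ : ∫⁻ ω, (N ν ω : ℝ≥0∞) ^ β ∂P
          ≤ (∫⁻ ω, (N ν ω : ℝ≥0∞) ^ (n:ℝ) ∂P) ^ ((β:ℝ)/n) :=
        cp_holder_pow P _ ((measurable_from_top.comp (hNmeas ν)).aemeasurable :
          AEMeasurable (fun ω => (N ν ω : ℝ≥0∞)) P) β n (by linarith) hβn
      have hENn : ∫⁻ ω, (N ν ω : ℝ≥0∞) ^ (n:ℝ) ∂P ≤ Cn * ENNReal.ofReal ν ^ n := by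
        rw [hNc n]
        calc ∑' k : ℕ, P {ω | N ν ω = k} * (k : ℝ≥0∞) ^ (n:ℝ)
            ≤ ∑' k : ℕ, P {ω | N ν ω = k} *
                ((2:ℝ≥0∞) ^ n * (Nat.descFactorial k n : ℝ≥0∞) + (2*n) ^ n) := by
              refine ENNReal.tsum_le_tsum fun k => mul_le_mul_right ?_ _
              rw [ENNReal.rpow_natCast]
              calc (k : ℝ≥0∞) ^ n = ((k ^ n : ℕ) : ℝ≥0∞) := by push_cast; ring
                _ ≤ (((2 ^ n * Nat.descFactorial k n + (2 * n) ^ n : ℕ)) : ℝ≥0∞) := by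
                    exact_mod_cast Nat.cast_le.2 (cp_nat_pow_le n k)
                _ = (2:ℝ≥0∞) ^ n * (Nat.descFactorial k n : ℝ≥0∞) + (2*n) ^ n := by
                    push_cast; ring
          _ = (2:ℝ≥0∞) ^ n * ∑' k : ℕ, P {ω | N ν ω = k} * (Nat.descFactorial k n : ℝ≥0∞)
                + (2*n) ^ n * ∑' k : ℕ, P {ω | N ν ω = k} := by
              simp only [mul_add]
              rw [ENNReal.tsum_add]
              congr 1
              · rw [← ENNReal.tsum_mul_left]
                exact tsum_congr fun k => by ring
              · rw [← ENNReal.tsum_mul_left]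
                exact tsum_congr fun k => by ring
          _ = (2:ℝ≥0∞) ^ n * ENNReal.ofReal ν ^ n + (2*n) ^ n := by
              rw [hPS n, hsum1, mul_one, ← ENNReal.ofReal_pow hν0.le]
          _ ≤ Cn * ENNReal.ofReal ν ^ n := by
              rw [hCn, add_mul]
              refine add_le_add le_rfl ?_
              nth_rewrite 1 [← mul_one ((2*(n:ℝ≥0∞)) ^ n)]
              refine mul_le_mul_right ?_ _
              refine one_le_pow_of_one_le' ?_ n
              exact ENNReal.one_le_ofReal.2 hν1
      calc I ν β = ∑' k : ℕ, P {ω | N ν ω = k} * ∫⁻ ω, S' k ω ^ β ∂P := key β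
        _ ≤ ∑' k : ℕ, P {ω | N ν ω = k} * ((k:ℝ≥0∞) ^ β * Mβ) :=
            ENNReal.tsum_le_tsum fun k => mul_le_mul_right (hJβ k) _
        _ = (∑' k : ℕ, P {ω | N ν ω = k} * (k:ℝ≥0∞) ^ β) * Mβ := by
            rw [← ENNReal.tsum_mul_right]
            exact tsum_congr fun k => by ring
        _ = (∫⁻ ω, (N ν ω : ℝ≥0∞) ^ β ∂P) * Mβ := by rw [hNc β]
        _ ≤ ((Cn * ENNReal.ofReal ν ^ n) ^ ((β:ℝ)/n)) * Mβ := by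
            refine mul_le_mul_left (le_trans hNβ ?_) _
            exact ENNReal.rpow_le_rpow hENn (by positivity)
        _ = A * ENNReal.ofReal ν ^ β := by
            rw [hA, ENNReal.mul_rpow_of_nonneg _ _ (by positivity : (0:ℝ) ≤ β/n)]
            have hnn : ((ENNReal.ofReal ν) ^ n) ^ ((β:ℝ)/n) = ENNReal.ofReal ν ^ β := by
              rw [← ENNReal.rpow_natCast _ n, ← ENNReal.rpow_mul]
              congr 1
              field_simp
              exact div_self (Nat.cast_ne_zero.2 (by rw [hn]; exact Nat.succ_ne_zero _))
            rw [hnn]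
            ring
    -- interpolation hypothesis
    have hint : ∀ r s θ : ℝ, 0 ≤ r → 0 ≤ s → 0 < θ → θ < 1 →
        I ν (θ*r + (1-θ)*s) ≤ (I ν r)^θ * (I ν s)^(1-θ) := by
      intro r s θ hr hs hθ0 hθ1
      exact cp_interp P hX'meas.aemeasurable hr hs hθ0 hθ1
    exact hcC (I ν) (ENNReal.ofReal ν)
      (by simp [ENNReal.ofReal_eq_zero]; linarith) ENNReal.ofReal_ne_top
      hI1 hIβ hI0 hint
  -- ## conversion to real integrals and the limit
  have hconv : ∀ ν : ℝ,
      ∫ ω, (∑ j ∈ Finset.range (N ν ω), Z j ω) ^ α ∂P = (I ν α).toReal := by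
    intro ν
    have hXmeas : Measurable (fun ω => ∑ j ∈ Finset.range (N ν ω), Z j ω) := by
      have h : Measurable (fun q : Ω × ℕ => ∑ j ∈ Finset.range q.2, Z j q.1) :=
        measurable_from_prod_countable_left
          (fun k => (Finset.measurable_sum (Finset.range k) (fun j _ => hZmeas j) :
            Measurable fun a => ∑ j ∈ Finset.range k, Z j a))
      exact h.comp (measurable_id.prodMk (hNmeas ν))
    rw [integral_eq_lintegral_of_nonneg_ae
      (ae_of_all _ fun ω => Real.rpow_nonneg
        (Finset.sum_nonneg fun j _ => hZnonneg j ω) α)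
      ((hXmeas.pow_const α).aestronglyMeasurable)]
    congr 1
    refine lintegral_congr fun ω => ?_
    rw [← ENNReal.ofReal_rpow_of_nonneg (Finset.sum_nonneg fun j _ => hZnonneg j ω) hα0.le,
      ENNReal.ofReal_sum_of_nonneg (fun j _ => hZnonneg j ω)]
  refine cp_limit _ α c.toReal C.toReal (ENNReal.toReal_pos hc0 hct) ?_
  intro ν hν1
  have hν0 : (0:ℝ) < ν := by linarith
  obtain ⟨hlow, hup⟩ := hper ν hν1
  have hνα_t : C * ENNReal.ofReal ν ^ α ≠ ⊤ :=
    ENNReal.mul_ne_top hCt (ENNReal.rpow_ne_top_of_nonneg hα0.le ENNReal.ofReal_ne_top)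
  have hIαt : I ν α ≠ ⊤ := ne_top_of_le_ne_top hνα_t hup
  have htr : ∀ D : ℝ≥0∞, (D * ENNReal.ofReal ν ^ α).toReal = D.toReal * ν ^ α := by
    intro D
    rw [ENNReal.toReal_mul, ← ENNReal.toReal_rpow, ENNReal.toReal_ofReal hν0.le]
  constructor
  · rw [hconv ν, ← htr c]
    exact ENNReal.toReal_mono hIαt hlow
  · rw [hconv ν, ← htr C]
    exact ENNReal.toReal_mono hνα_t hup
end

section
/- Let (ξ_n) be positive random variables with Λ_ξ(α) = limsup_n n^{−1} log E(ξ_n^α) satisfying lim_{α→0+} Λ_ξ(α) = 0 and lim_{α→∞} Λ_ξ(α) = −∞ (hypothesis H1). Then Λ_ξ is strictly decreasing on (0,∞), and for every ε > 0 there is δ > 0 such that for all α ≥ 1+ε, E(ξ_n^α) = O(exp(n(Λ_ξ(1) − δ))) as n → ∞, and P(ξ_n > 1) = O(exp(n(Λ_ξ(1) − δ))). -/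
open MeasureTheory Filter
open scoped ENNReal

namespace CumulantAux

lemma coe_mul_ne_bot {c : ℝ} (hc : 0 < c) {x : EReal} (hx : x ≠ ⊥) : (c : EReal) * x ≠ ⊥ := by
  induction x with
  | bot => exact absurd rfl hx
  | coe a => rw [← EReal.coe_mul]; exact EReal.coe_ne_bot _
  | top => rw [EReal.coe_mul_top_of_pos hc]; exact top_ne_bot

lemma coe_mul_ne_top {c : ℝ} (hc : 0 < c) {x : EReal} (hx : x ≠ ⊤) : (c : EReal) * x ≠ ⊤ := by
  induction x with
  | bot => rw [EReal.coe_mul_bot_of_pos hc]; exact bot_ne_top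
  | coe a => rw [← EReal.coe_mul]; exact EReal.coe_ne_top _
  | top => exact absurd rfl hx

/-- Multiplication by a positive real constant as an order isomorphism of `EReal`. -/
noncomputable def mulIso (c : ℝ) (hc : 0 < c) : EReal ≃o EReal where
  toFun x := (c : EReal) * x
  invFun x := ((c⁻¹ : ℝ) : EReal) * x
  left_inv x := by
    show ((c⁻¹ : ℝ) : EReal) * ((c : EReal) * x) = x
    rw [← mul_assoc, ← EReal.coe_mul, inv_mul_cancel₀ hc.ne', EReal.coe_one, one_mul]
  right_inv x := by
    show ((c : EReal)) * (((c⁻¹ : ℝ) : EReal) * x) = x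
    rw [← mul_assoc, ← EReal.coe_mul, mul_inv_cancel₀ hc.ne', EReal.coe_one, one_mul]
  map_rel_iff' := by
    intro x y
    show (c : EReal) * x ≤ (c : EReal) * y ↔ x ≤ y
    constructor
    · intro h
      have h2 := mul_le_mul_of_nonneg_left h
        (le_of_lt (by exact_mod_cast inv_pos.2 hc : (0 : EReal) < ((c⁻¹ : ℝ) : EReal)))
      rwa [← mul_assoc, ← mul_assoc, ← EReal.coe_mul, inv_mul_cancel₀ hc.ne', EReal.coe_one,
        one_mul, one_mul] at h2
    · intro h
      exact mul_le_mul_of_nonneg_left h (by exact_mod_cast hc.le)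

lemma limsup_coe_mul {u : ℕ → EReal} {c : ℝ} (hc : 0 < c) :
    limsup (fun n => (c : EReal) * u n) atTop = (c : EReal) * limsup u atTop := by
  have h := ((mulIso c hc).limsup_apply (u := u) (f := atTop)).symm
  simpa [mulIso] using h

lemma coe_mul_add_of_ne_bot {c : ℝ} (hc : 0 ≤ c) {a b : EReal} (ha : a ≠ ⊥) (hb : b ≠ ⊥) :
    (c : EReal) * (a + b) = (c : EReal) * a + (c : EReal) * b := by
  rcases eq_or_lt_of_le hc with rfl | hc
  · simp
  · induction a with
    | bot => exact absurd rfl ha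
    | coe a =>
      induction b with
      | bot => exact absurd rfl hb
      | coe b => norm_cast; ring
      | top =>
        rw [EReal.add_top_of_ne_bot (EReal.coe_ne_bot a), EReal.coe_mul_top_of_pos hc,
          ← EReal.coe_mul, EReal.add_top_of_ne_bot (EReal.coe_ne_bot _)]
    | top =>
      induction b with
      | bot => exact absurd rfl hb
      | coe b =>
        rw [EReal.top_add_of_ne_bot (EReal.coe_ne_bot b), EReal.coe_mul_top_of_pos hc,
          ← EReal.coe_mul, EReal.top_add_of_ne_bot (EReal.coe_ne_bot _)]
      | top =>
        rw [EReal.top_add_top, EReal.coe_mul_top_of_pos hc, EReal.top_add_top]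

open scoped ENNReal


lemma meas_ofReal_rpow {Ω : Type*} [MeasurableSpace Ω] {X : Ω → ℝ} (hX : Measurable X)
    {α : ℝ} (hα : 0 ≤ α) : Measurable fun ω => ENNReal.ofReal (X ω ^ α) :=
  ENNReal.measurable_ofReal.comp ((Real.continuous_rpow_const hα).measurable.comp hX)

lemma lint_ne_zero {Ω : Type*} [MeasurableSpace Ω] (P : Measure Ω) [IsProbabilityMeasure P]
    {X : Ω → ℝ} (hX : Measurable X) (hXpos : ∀ᵐ ω ∂P, 0 < X ω) {α : ℝ} (hα : 0 ≤ α) :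
    (∫⁻ ω, ENNReal.ofReal (X ω ^ α) ∂P) ≠ 0 := by
  intro h
  rw [lintegral_eq_zero_iff (meas_ofReal_rpow hX hα)] at h
  obtain ⟨ω, h1, h2⟩ := (h.and hXpos).exists
  have : (0:ℝ) < X ω ^ α := Real.rpow_pos_of_pos h2 α
  simp only [Pi.zero_apply, ENNReal.ofReal_eq_zero] at h1
  linarith

lemma holder_aux {Ω : Type*} [MeasurableSpace Ω] (P : Measure Ω)
    {X : Ω → ℝ} (hX : Measurable X) (hXpos : ∀ᵐ ω ∂P, 0 < X ω)
    {t α γ : ℝ} (ht : 0 < t) (ht1 : t < 1) (hα : 0 ≤ α) (hγ : 0 ≤ γ) :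
    (∫⁻ ω, ENNReal.ofReal (X ω ^ (t * α + (1 - t) * γ)) ∂P)
      ≤ (∫⁻ ω, ENNReal.ofReal (X ω ^ α) ∂P) ^ t
        * (∫⁻ ω, ENNReal.ofReal (X ω ^ γ) ∂P) ^ (1 - t) := by
  have h1t : (0:ℝ) < 1 - t := by linarith
  set f : Ω → ℝ≥0∞ := fun ω => ENNReal.ofReal (X ω ^ α) ^ t with hf
  set g : Ω → ℝ≥0∞ := fun ω => ENNReal.ofReal (X ω ^ γ) ^ (1 - t) with hg
  have hfm : Measurable f := ENNReal.continuous_rpow_const.measurable.comp (meas_ofReal_rpow hX hα)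
  have hgm : Measurable g := ENNReal.continuous_rpow_const.measurable.comp (meas_ofReal_rpow hX hγ)
  have hpq : (1/t).HolderConjugate (1/(1-t)) := by
    constructor
    · rw [one_div, one_div, inv_inv, inv_inv, inv_one]; ring
    · exact one_div_pos.2 ht
    · exact one_div_pos.2 h1t
  have heq : (∫⁻ ω, ENNReal.ofReal (X ω ^ (t * α + (1 - t) * γ)) ∂P)
      = ∫⁻ ω, (f * g) ω ∂P := by
    apply lintegral_congr_ae
    filter_upwards [hXpos] with ω hω
    show ENNReal.ofReal (X ω ^ (t * α + (1 - t) * γ)) = f ω * g ω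
    rw [hf, hg]
    simp only
    rw [Real.rpow_add hω, show t * α = α * t by ring, show (1 - t) * γ = γ * (1 - t) by ring,
      Real.rpow_mul hω.le, Real.rpow_mul hω.le,
      ENNReal.ofReal_mul (Real.rpow_nonneg (Real.rpow_nonneg hω.le α) t),
      ENNReal.ofReal_rpow_of_nonneg (Real.rpow_nonneg hω.le α) ht.le,
      ENNReal.ofReal_rpow_of_nonneg (Real.rpow_nonneg hω.le γ) h1t.le]
  have hH := ENNReal.lintegral_mul_le_Lp_mul_Lq P hpq hfm.aemeasurable hgm.aemeasurable
  have hfp : ∀ ω, f ω ^ (1/t) = ENNReal.ofReal (X ω ^ α) := fun ω => by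
    rw [hf]; simp only
    rw [← ENNReal.rpow_mul, mul_one_div_cancel ht.ne', ENNReal.rpow_one]
  have hgp : ∀ ω, g ω ^ (1/(1-t)) = ENNReal.ofReal (X ω ^ γ) := fun ω => by
    rw [hg]; simp only
    rw [← ENNReal.rpow_mul, mul_one_div_cancel h1t.ne', ENNReal.rpow_one]
  rw [heq]
  calc (∫⁻ ω, (f * g) ω ∂P)
      ≤ (∫⁻ ω, f ω ^ (1/t) ∂P) ^ (1/(1/t)) * (∫⁻ ω, g ω ^ (1/(1-t)) ∂P) ^ (1/(1/(1-t))) := hH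
    _ = (∫⁻ ω, ENNReal.ofReal (X ω ^ α) ∂P) ^ t
        * (∫⁻ ω, ENNReal.ofReal (X ω ^ γ) ∂P) ^ (1 - t) := by
      simp only [hfp, hgp, one_div_one_div]


lemma log_ne_bot {Ω : Type*} [MeasurableSpace Ω] (P : Measure Ω) [IsProbabilityMeasure P]
    {X : Ω → ℝ} (hX : Measurable X) (hXpos : ∀ᵐ ω ∂P, 0 < X ω) {α : ℝ} (hα : 0 ≤ α) :
    ENNReal.log (∫⁻ ω, ENNReal.ofReal (X ω ^ α) ∂P) ≠ ⊥ := by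
  exact fun h => lint_ne_zero P hX hXpos hα (ENNReal.log_eq_bot_iff.1 h)

lemma convexity_aux {Ω : Type*} [MeasurableSpace Ω] (P : Measure Ω) [IsProbabilityMeasure P]
    (ξ : ℕ → Ω → ℝ) (hξmeas : ∀ n, Measurable (ξ n))
    (hξpos : ∀ n, ∀ᵐ ω ∂P, 0 < ξ n ω)
    (Λ : ℝ → EReal)
    (hΛ : ∀ α : ℝ, Λ α =
      limsup (fun n : ℕ =>
        (((n : ℝ)⁻¹ : ℝ) : EReal) *
          ENNReal.log (∫⁻ ω, ENNReal.ofReal (ξ n ω ^ α) ∂P)) atTop)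
    {t α γ : ℝ} (ht : 0 < t) (ht1 : t < 1) (hα : 0 ≤ α) (hγ : 0 ≤ γ)
    (hαbot : Λ α ≠ ⊥) (hαtop : Λ α ≠ ⊤) :
    Λ (t * α + (1 - t) * γ) ≤ (t : EReal) * Λ α + ((1 - t : ℝ) : EReal) * Λ γ := by
  have h1t : (0:ℝ) < 1 - t := by linarith
  set x : ℕ → EReal := fun n =>
    (((n : ℝ)⁻¹ : ℝ) : EReal) * ENNReal.log (∫⁻ ω, ENNReal.ofReal (ξ n ω ^ α) ∂P) with hx
  set y : ℕ → EReal := fun n =>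
    (((n : ℝ)⁻¹ : ℝ) : EReal) * ENNReal.log (∫⁻ ω, ENNReal.ofReal (ξ n ω ^ γ) ∂P) with hy
  have hxΛ : Λ α = limsup x atTop := hΛ α
  have hyΛ : Λ γ = limsup y atTop := hΛ γ
  -- pointwise inequality
  have hpt : ∀ n : ℕ,
      (((n : ℝ)⁻¹ : ℝ) : EReal) *
        ENNReal.log (∫⁻ ω, ENNReal.ofReal (ξ n ω ^ (t * α + (1 - t) * γ)) ∂P)
      ≤ (t : EReal) * x n + ((1 - t : ℝ) : EReal) * y n := by
    intro n
    set A := ∫⁻ ω, ENNReal.ofReal (ξ n ω ^ α) ∂P with hA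
    set B := ∫⁻ ω, ENNReal.ofReal (ξ n ω ^ γ) ∂P with hB
    have hlog : ENNReal.log (∫⁻ ω, ENNReal.ofReal (ξ n ω ^ (t * α + (1 - t) * γ)) ∂P)
        ≤ (t : EReal) * ENNReal.log A + ((1 - t : ℝ) : EReal) * ENNReal.log B := by
      calc ENNReal.log (∫⁻ ω, ENNReal.ofReal (ξ n ω ^ (t * α + (1 - t) * γ)) ∂P)
          ≤ ENNReal.log (A ^ t * B ^ (1 - t)) :=
            ENNReal.log_monotone (holder_aux P (hξmeas n) (hξpos n) ht ht1 hα hγ)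
        _ = (t : EReal) * ENNReal.log A + ((1 - t : ℝ) : EReal) * ENNReal.log B := by
            rw [ENNReal.log_mul_add, ENNReal.log_rpow, ENNReal.log_rpow]
    have hmul := mul_le_mul_of_nonneg_left hlog
      (by exact_mod_cast inv_nonneg.2 (Nat.cast_nonneg n) : (0:EReal) ≤ (((n : ℝ)⁻¹ : ℝ) : EReal))
    refine hmul.trans_eq ?_
    have hAbot : (t : EReal) * ENNReal.log A ≠ ⊥ :=
      coe_mul_ne_bot ht (log_ne_bot P (hξmeas n) (hξpos n) hα)
    have hBbot : ((1 - t : ℝ) : EReal) * ENNReal.log B ≠ ⊥ :=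
      coe_mul_ne_bot h1t (log_ne_bot P (hξmeas n) (hξpos n) hγ)
    rw [coe_mul_add_of_ne_bot (inv_nonneg.2 (Nat.cast_nonneg n)) hAbot hBbot]
    rw [hx, hy]
    simp only
    rw [← mul_assoc, ← mul_assoc, ← EReal.coe_mul, ← EReal.coe_mul,
      mul_comm ((n:ℝ)⁻¹) t, mul_comm ((n:ℝ)⁻¹) (1-t), EReal.coe_mul, EReal.coe_mul,
      mul_assoc, mul_assoc]
  -- limsup inequality
  rw [hΛ ((t * α + (1 - t) * γ)), hxΛ, hyΛ]
  calc limsup (fun n : ℕ =>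
        (((n : ℝ)⁻¹ : ℝ) : EReal) *
          ENNReal.log (∫⁻ ω, ENNReal.ofReal (ξ n ω ^ (t * α + (1 - t) * γ)) ∂P)) atTop
      ≤ limsup (fun n => (t : EReal) * x n + ((1 - t : ℝ) : EReal) * y n) atTop :=
        limsup_le_limsup (Eventually.of_forall hpt)
    _ ≤ limsup (fun n => (t : EReal) * x n) atTop
          + limsup (fun n => ((1 - t : ℝ) : EReal) * y n) atTop := by
        apply EReal.limsup_add_le
        · left
          rw [limsup_coe_mul ht, ← hxΛ]
          exact coe_mul_ne_bot ht hαbot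
        · left
          rw [limsup_coe_mul ht, ← hxΛ]
          exact coe_mul_ne_top ht hαtop
    _ = (t : EReal) * limsup x atTop + ((1 - t : ℝ) : EReal) * limsup y atTop := by
        rw [limsup_coe_mul ht, limsup_coe_mul h1t]

end CumulantAux

open CumulantAux

/-- Under hypothesis (H1), the limiting cumulant function `Λ_ξ` is strictly
decreasing on `(0,∞)`, `Λ_ξ(1)` is finite, and for every `ε > 0` there is
`δ > 0` with `E(ξ_n^α) = O(exp(n(Λ_ξ(1) − δ)))` for all `α ≥ 1 + ε`, and
`P(ξ_n > 1) = O(exp(n(Λ_ξ(1) − δ)))`. -/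
theorem limiting_cumulant_strictAnti_and_moment_bound
    {Ω : Type*} [MeasurableSpace Ω] (P : Measure Ω) [IsProbabilityMeasure P]
    (ξ : ℕ → Ω → ℝ) (hξmeas : ∀ n, Measurable (ξ n))
    (hξpos : ∀ n, ∀ᵐ ω ∂P, 0 < ξ n ω)
    (Λ : ℝ → EReal)
    (hΛ : ∀ α : ℝ, Λ α =
      limsup (fun n : ℕ =>
        (((n : ℝ)⁻¹ : ℝ) : EReal) *
          ENNReal.log (∫⁻ ω, ENNReal.ofReal (ξ n ω ^ α) ∂P)) atTop)
    (hH1zero : Tendsto Λ (nhdsWithin 0 (Set.Ioi 0)) (nhds (0 : EReal)))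
    (hH1infty : Tendsto Λ atTop (nhds (⊥ : EReal))) :
    StrictAntiOn Λ (Set.Ioi (0 : ℝ)) ∧
    ∃ l : ℝ, Λ 1 = (l : EReal) ∧
      ∀ ε > (0 : ℝ), ∃ δ > (0 : ℝ),
        (∀ α : ℝ, 1 + ε ≤ α → ∃ C : ℝ, ∀ᶠ n : ℕ in atTop,
          (∫⁻ ω, ENNReal.ofReal (ξ n ω ^ α) ∂P) ≤
            ENNReal.ofReal (C * Real.exp (n * (l - δ)))) ∧
        (∃ C : ℝ, ∀ᶠ n : ℕ in atTop,
          P {ω | 1 < ξ n ω} ≤ ENNReal.ofReal (C * Real.exp (n * (l - δ)))) := by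
  
  -- Good points near zero
  have hE : ∀ β : ℝ, 0 < β → ∃ s : ℝ, 0 < s ∧ s < β ∧ Λ s ≠ ⊥ ∧ Λ s ≠ ⊤ := by
    intro β hβ
    have h1 : ∀ᶠ s in nhdsWithin 0 (Set.Ioi (0:ℝ)), Λ s ∈ Set.Ioo (-1 : EReal) 1 :=
      hH1zero (Ioo_mem_nhds (by simpa using EReal.coe_lt_coe_iff.2 (show (-1:ℝ) < 0 by norm_num)) (by exact_mod_cast (by norm_num : (0:ℝ) < 1)))
    have h2 : Set.Ioo (0:ℝ) β ∈ nhdsWithin 0 (Set.Ioi (0:ℝ)) :=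
      Ioo_mem_nhdsGT_of_mem ⟨le_refl 0, hβ⟩
    obtain ⟨s, hs1, hs2⟩ := (h1.and (eventually_of_mem h2 (fun x hx => hx))).exists
    exact ⟨s, hs2.1, hs2.2, (bot_le.trans_lt hs1.1).ne', (hs1.2.trans_le le_top).ne⟩
  -- Λ is finite on (0,∞)
  have hfin : ∀ β : ℝ, 0 < β → Λ β ≠ ⊥ ∧ Λ β ≠ ⊤ := by
    intro β hβ
    obtain ⟨s, hs0, hsβ, hsbot, hstop⟩ := hE β hβ
    constructor
    · intro hbot
      obtain ⟨s₂, hs20, hs2s, hs2bot, hs2top⟩ := hE s hs0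
      set t : ℝ := (β - s) / (β - s₂) with htdef
      have hβs₂ : (0:ℝ) < β - s₂ := by linarith
      have ht : 0 < t := div_pos (by linarith) hβs₂
      have ht1 : t < 1 := (div_lt_one hβs₂).2 (by linarith)
      have hms : t * (β - s₂) = β - s := div_mul_cancel₀ _ hβs₂.ne'
      rw [mul_sub] at hms
      have hexpand : t * s₂ + (1 - t) * β = t * s₂ + β - t * β := by ring
      have hcomb : t * s₂ + (1 - t) * β = s := by linarith
      have hconv := convexity_aux P ξ hξmeas hξpos Λ hΛ ht ht1 hs20.le hβ.le hs2bot hs2top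
      rw [hcomb, hbot, EReal.coe_mul_bot_of_pos (by linarith : (0:ℝ) < 1 - t),
        EReal.add_bot] at hconv
      exact hsbot (le_bot_iff.1 hconv)
    · intro htop
      obtain ⟨b, hbβ, hbneg⟩ := ((eventually_gt_atTop β).and
        (hH1infty.eventually (Iio_mem_nhds (by simp : (⊥:EReal) < 0)))).exists
      set t : ℝ := (b - β) / (b - s) with htdef
      have hbs : (0:ℝ) < b - s := by linarith
      have ht : 0 < t := div_pos (by linarith) hbs
      have ht1 : t < 1 := (div_lt_one hbs).2 (by linarith)
      have hms : t * (b - s) = b - β := div_mul_cancel₀ _ hbs.ne'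
      rw [mul_sub] at hms
      have hexpand : t * s + (1 - t) * b = t * s + b - t * b := by ring
      have hcomb : t * s + (1 - t) * b = β := by linarith
      have hconv := convexity_aux P ξ hξmeas hξpos Λ hΛ ht ht1 hs0.le
        (by linarith : (0:ℝ) ≤ b) hsbot hstop
      rw [hcomb, htop] at hconv
      have hne : (t : EReal) * Λ s + ((1 - t : ℝ) : EReal) * Λ b ≠ ⊤ := by
        have h1 := coe_mul_ne_top ht hstop
        have h2 := coe_mul_ne_top (by linarith : (0:ℝ) < 1 - t) (ne_top_of_lt hbneg)
        exact (EReal.add_lt_top h1 h2).ne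
      exact hne (top_le_iff.1 hconv)
  -- strict antitonicity
  have hanti : StrictAntiOn Λ (Set.Ioi (0:ℝ)) := by
    intro α hα β hβ hαβ
    simp only [Set.mem_Ioi] at hα hβ
    obtain ⟨haB, haT⟩ := hfin α hα
    obtain ⟨hbB, hbT⟩ := hfin β hβ
    by_contra hcon
    push_neg at hcon
    have ha : Λ α = ((Λ α).toReal : EReal) := (EReal.coe_toReal haT haB).symm
    have hb : Λ β = ((Λ β).toReal : EReal) := (EReal.coe_toReal hbT hbB).symm
    set a : ℝ := (Λ α).toReal
    set b : ℝ := (Λ β).toReal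
    have hab : a ≤ b := by
      rw [ha, hb] at hcon; exact_mod_cast hcon
    have hall : ∀ γ : ℝ, β < γ → Λ β ≤ Λ γ := by
      intro γ hγ
      set t : ℝ := (γ - β) / (γ - α) with htdef
      have hγα : (0:ℝ) < γ - α := by linarith
      have ht : 0 < t := div_pos (by linarith) hγα
      have ht1 : t < 1 := (div_lt_one hγα).2 (by linarith)
      have hms : t * (γ - α) = γ - β := div_mul_cancel₀ _ hγα.ne'
      rw [mul_sub] at hms
      have hexpand : t * α + (1 - t) * γ = t * α + γ - t * γ := by ring
      have hcomb : t * α + (1 - t) * γ = β := by linarith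
      have hconv := convexity_aux P ξ hξmeas hξpos Λ hΛ ht ht1 hα.le
        (by linarith : (0:ℝ) ≤ γ) haB haT
      rw [hcomb] at hconv
      by_cases hgb : Λ γ = ⊥
      · rw [ha, hgb, EReal.coe_mul_bot_of_pos (by linarith : (0:ℝ) < 1 - t),
          EReal.add_bot] at hconv
        exact absurd (le_bot_iff.1 hconv) hbB
      · by_cases hgt : Λ γ = ⊤
        · rw [hgt]; exact le_top
        · have hc : Λ γ = ((Λ γ).toReal : EReal) := (EReal.coe_toReal hgt hgb).symm
          set c : ℝ := (Λ γ).toReal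
          have hreal : b ≤ t * a + (1 - t) * c := by
            rw [ha, hb, hc] at hconv
            exact_mod_cast hconv
          have hbc : b ≤ c := by nlinarith [mul_le_mul_of_nonneg_left hab ht.le]
          rw [hb, hc]
          exact_mod_cast hbc
    obtain ⟨γ, hγβ, hγlt⟩ := ((eventually_gt_atTop β).and
      (hH1infty.eventually (Iio_mem_nhds (Ne.bot_lt hbB)))).exists
    exact absurd (hall γ hγβ) (not_le.2 hγlt)
  obtain ⟨h1B, h1T⟩ := hfin 1 one_pos
  have hleq : Λ 1 = ((Λ 1).toReal : EReal) := (EReal.coe_toReal h1T h1B).symm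
  set l : ℝ := (Λ 1).toReal
  refine ⟨hanti, l, hleq, ?_⟩
  intro ε hε
  obtain ⟨hmB, hmT⟩ := hfin (1+ε) (by linarith)
  have hmeq : Λ (1+ε) = ((Λ (1+ε)).toReal : EReal) := (EReal.coe_toReal hmT hmB).symm
  set m : ℝ := (Λ (1+ε)).toReal
  have hml : m < l := by
    have h := hanti (Set.mem_Ioi.2 one_pos) (Set.mem_Ioi.2 (by linarith : (0:ℝ) < 1+ε))
      (by linarith)
    rw [hmeq, hleq] at h
    exact_mod_cast h
  refine ⟨(l - m)/2, by linarith, ?_⟩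
  have hbd : ∀ α : ℝ, 1 + ε ≤ α → ∀ᶠ n : ℕ in atTop,
      (∫⁻ ω, ENNReal.ofReal (ξ n ω ^ α) ∂P)
        ≤ ENNReal.ofReal (Real.exp (n * (l - (l - m)/2))) := by
    intro α hαε
    have hΛα : Λ α ≤ ((m : ℝ) : EReal) := by
      rcases eq_or_lt_of_le hαε with rfl | hlt
      · exact hmeq.le
      · rw [← hmeq]
        exact (hanti (Set.mem_Ioi.2 (by linarith : (0:ℝ) < 1+ε))
          (Set.mem_Ioi.2 (by linarith : (0:ℝ) < α)) hlt).le
    have hlim : Λ α < ((l - (l - m)/2 : ℝ) : EReal) :=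
      lt_of_le_of_lt hΛα (by exact_mod_cast (by linarith : m < l - (l - m)/2))
    rw [hΛ α] at hlim
    filter_upwards [eventually_lt_of_limsup_lt hlim, eventually_ge_atTop 1] with n hn hn1
    have hnpos : (0:ℝ) < (n:ℝ) := by exact_mod_cast Nat.lt_of_lt_of_le Nat.zero_lt_one hn1
    have hkey : ENNReal.log (∫⁻ ω, ENNReal.ofReal (ξ n ω ^ α) ∂P)
        ≤ (((n:ℝ) * (l - (l - m)/2) : ℝ) : EReal) := by
      have h2 := mul_le_mul_of_nonneg_left hn.le
        (by exact_mod_cast hnpos.le : (0:EReal) ≤ ((n:ℝ) : EReal))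
      rwa [← mul_assoc, ← EReal.coe_mul, mul_inv_cancel₀ hnpos.ne', EReal.coe_one, one_mul,
        ← EReal.coe_mul] at h2
    rw [← ENNReal.log_le_log_iff, ENNReal.log_ofReal_of_pos (Real.exp_pos _), Real.log_exp]
    exact hkey
  constructor
  · intro α hαε
    refine ⟨1, ?_⟩
    filter_upwards [hbd α hαε] with n hn
    rwa [one_mul]
  · refine ⟨1, ?_⟩
    filter_upwards [hbd (1+ε) le_rfl] with n hn
    rw [one_mul]
    calc P {ω | 1 < ξ n ω} = ∫⁻ ω in {ω | 1 < ξ n ω}, 1 ∂P := (setLIntegral_one _).symm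
      _ ≤ ∫⁻ ω in {ω | 1 < ξ n ω}, ENNReal.ofReal (ξ n ω ^ (1+ε)) ∂P := by
          refine setLIntegral_mono (meas_ofReal_rpow (hξmeas n) (by linarith)) ?_
          intro ω hω
          have hω1 : (1:ℝ) ≤ ξ n ω := le_of_lt hω
          have h1 := Real.rpow_le_rpow_of_exponent_le hω1 (by linarith : (0:ℝ) ≤ 1+ε)
          rw [Real.rpow_zero] at h1
          exact ENNReal.one_le_ofReal.2 h1
      _ ≤ ∫⁻ ω, ENNReal.ofReal (ξ n ω ^ (1+ε)) ∂P := setLIntegral_le_lintegral _ _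
      _ ≤ ENNReal.ofReal (Real.exp (n * (l - (l - m)/2))) := hn
end

section
/- Let A, A₁, A₂, … be i.i.d. positive random variables and ρ an independent ℕ∪{0}-valued random variable with P(ρ = n) ∝ p_{n+1} where Σ p_n < ∞ and n^{−1} log p_n → −υ < 0. Let i, Z be independent positive random variables (independent of everything), and suppose that the estimate P(A₁⋯A_ρ > v(1+v^{−δ'})) = (1+o(1)) P(A₁⋯A_ρ > v) holds as v → ∞ for some δ' > 0, and that for some ε > 0, P(A₁⋯A_ρ (1+i)Z > u) = (1+o(1)) ∫_{u^{−ε}}^{u^{1−ε}} P(A₁⋯A_ρ > u/x) dH(x), where H is the distribution function of (1+i)Z. Then for any δ > (1+ε)δ', P(A₁⋯A_ρ (1+i)Z > u(1+u^{−δ})) ≥ (1+o(1)) P(A₁⋯A_ρ (1+i)Z > u) as u → ∞. -/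
open MeasureTheory Filter ProbabilityTheory

lemma key_id {Ω : Type*} [MeasurableSpace Ω] (P : Measure Ω) [IsProbabilityMeasure P]
    (X W : Ω → ℝ) (hX : Measurable X) (hW : Measurable W)
    (hind : IndepFun X W P) (u a b : ℝ) (ha : 0 < a) :
    P {ω | W ω * X ω > u ∧ X ω ∈ Set.Icc a b}
      = ∫⁻ x in Set.Icc a b, P {ω | W ω > u / x} ∂(Measure.map X P) := by
  have hmap := (indepFun_iff_map_prod_eq_prod_map_map hX.aemeasurable hW.aemeasurable).mp hind
  set S : Set (ℝ × ℝ) := {q : ℝ × ℝ | u < q.2 * q.1 ∧ q.1 ∈ Set.Icc a b} with hSdef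
  have hS : MeasurableSet S :=
    (measurableSet_lt measurable_const (measurable_snd.mul measurable_fst)).inter
      (measurable_fst measurableSet_Icc)
  have h1 : P {ω | W ω * X ω > u ∧ X ω ∈ Set.Icc a b}
      = Measure.map (fun ω => (X ω, W ω)) P S := by
    rw [Measure.map_apply (hX.prodMk hW) hS]
    rfl
  rw [h1, hmap, Measure.prod_apply hS]
  calc ∫⁻ x, (Measure.map W P) (Prod.mk x ⁻¹' S) ∂(Measure.map X P)
      = ∫⁻ x, Set.indicator (Set.Icc a b)
          (fun x => (Measure.map W P) {w : ℝ | u < w * x}) x ∂(Measure.map X P) := by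
        refine lintegral_congr fun x => ?_
        by_cases hx : x ∈ Set.Icc a b
        · rw [Set.indicator_of_mem hx]
          congr 1
          ext w
          simp only [hSdef, Set.mem_preimage, Set.mem_setOf_eq]
          exact ⟨fun h => h.1, fun h => ⟨h, hx⟩⟩
        · rw [Set.indicator_of_notMem hx]
          have : Prod.mk x ⁻¹' S = ∅ := by
            ext w
            simp only [hSdef, Set.mem_preimage, Set.mem_setOf_eq, Set.mem_empty_iff_false,
              iff_false]
            exact fun h => hx h.2
          simp [this]
    _ = ∫⁻ x in Set.Icc a b, (Measure.map W P) {w : ℝ | u < w * x} ∂(Measure.map X P) :=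
        lintegral_indicator measurableSet_Icc _
    _ = ∫⁻ x in Set.Icc a b, P {ω | W ω > u / x} ∂(Measure.map X P) := by
        refine setLIntegral_congr_fun measurableSet_Icc (fun x hx => ?_)
        have hx0 : 0 < x := lt_of_lt_of_le ha hx.1
        have hset : {w : ℝ | u < w * x} = Set.Ioi (u / x) := by
          ext w; simp [Set.mem_Ioi, div_lt_iff₀ hx0]
        rw [hset, Measure.map_apply hW measurableSet_Ioi]
        rfl

/-- Step 2 of the proof of Theorem 3.5, estimates (6.15)–(6.19): the tail
insensitivity property transfers from the product `A₁⋯A_ρ` to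
`A₁⋯A_ρ (1+i) Z`. -/
theorem tail_insensitivity_transfer
    {Ω : Type*} [MeasurableSpace Ω] (P : Measure Ω) [IsProbabilityMeasure P]
    (A : ℕ → Ω → ℝ) (hAmeas : ∀ j, Measurable (A j))
    (hAindep : iIndepFun A P)
    (hAident : ∀ j, Measure.map (A j) P = Measure.map (A 0) P)
    (hApos : ∀ j, ∀ᵐ ω ∂P, 0 < A j ω)
    (p : ℕ → ℝ) (hpnonneg : ∀ n, 0 ≤ p n) (hpsum : Summable p)
    (υ : ℝ) (hυ : 0 < υ)
    (hptail : Tendsto (fun n : ℕ => Real.log (p n) / n) atTop (nhds (-υ)))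
    (ρ : Ω → ℕ) (hρmeas : Measurable ρ)
    (hρdist : ∀ n : ℕ, P {ω | ρ ω = n} = ENNReal.ofReal (p (n + 1) / ∑' m, p m))
    (i Z : Ω → ℝ) (himeas : Measurable i) (hZmeas : Measurable Z)
    (hipos : ∀ᵐ ω ∂P, 0 < i ω) (hZpos : ∀ᵐ ω ∂P, 0 < Z ω)
    (hiZindep : IndepFun i Z P)
    (hρAindep : IndepFun ρ (fun ω => fun j => A j ω) P)
    (hiZrest : IndepFun (fun ω => (i ω, Z ω))
      (fun ω => (ρ ω, fun j => A j ω)) P)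
    (δ' : ℝ) (hδ' : 0 < δ')
    (hProdTail : Tendsto (fun v : ℝ =>
        (P {ω | (∏ j ∈ Finset.range (ρ ω), A j ω) > v * (1 + v ^ (-δ'))}).toReal /
          (P {ω | (∏ j ∈ Finset.range (ρ ω), A j ω) > v}).toReal)
      atTop (nhds 1))
    (ε : ℝ) (hε : 0 < ε)
    (hrep : Tendsto (fun u : ℝ =>
        (P {ω | (∏ j ∈ Finset.range (ρ ω), A j ω) * ((1 + i ω) * Z ω) > u}).toReal /
          ∫ x in Set.Icc (u ^ (-ε)) (u ^ (1 - ε)),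
            (P {ω | (∏ j ∈ Finset.range (ρ ω), A j ω) > u / x}).toReal
            ∂(Measure.map (fun ω => (1 + i ω) * Z ω) P))
      atTop (nhds 1)) :
    ∀ δ : ℝ, (1 + ε) * δ' < δ →
      1 ≤ liminf (fun u : ℝ =>
        (P {ω | (∏ j ∈ Finset.range (ρ ω), A j ω) * ((1 + i ω) * Z ω) >
            u * (1 + u ^ (-δ))}).toReal /
          (P {ω | (∏ j ∈ Finset.range (ρ ω), A j ω) * ((1 + i ω) * Z ω) > u}).toReal)
        atTop := by
  intro δ hδ
  set W : Ω → ℝ := fun ω => ∏ j ∈ Finset.range (ρ ω), A j ω with hWdef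
  set X : Ω → ℝ := fun ω => (1 + i ω) * Z ω with hXdef
  -- measurability
  have hWmeas : Measurable W := by
    have hg : Measurable fun q : (ℕ → ℝ) × ℕ => ∏ j ∈ Finset.range q.2, q.1 j :=
      measurable_from_prod_countable_left fun n =>
        show Measurable fun a : ℕ → ℝ => ∏ j ∈ Finset.range n, a j from
          Finset.measurable_prod _ fun j _ => measurable_pi_apply j
    exact hg.comp ((measurable_pi_lambda _ fun j => hAmeas j).prodMk hρmeas)
  have hXmeas : Measurable X := (measurable_const.add himeas).mul hZmeas
  have hindXW : IndepFun X W P := by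
    have hφ : Measurable fun q : ℝ × ℝ => (1 + q.1) * q.2 :=
      (measurable_const.add measurable_fst).mul measurable_snd
    have hψ : Measurable fun q : ℕ × (ℕ → ℝ) => ∏ j ∈ Finset.range q.1, q.2 j := by
      have hg : Measurable fun q : (ℕ → ℝ) × ℕ => ∏ j ∈ Finset.range q.2, q.1 j :=
        measurable_from_prod_countable_left fun n =>
          show Measurable fun a : ℕ → ℝ => ∏ j ∈ Finset.range n, a j from
            Finset.measurable_prod _ fun j _ => measurable_pi_apply j
      exact hg.comp measurable_swap
    exact hiZrest.comp hφ hψ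
  -- antitone tail probabilities
  have hTanti : ∀ {v w : ℝ}, v ≤ w →
      (P {ω | W ω > w}).toReal ≤ (P {ω | W ω > v}).toReal := fun {v w} h =>
    ENNReal.toReal_mono (measure_ne_top P _)
      (measure_mono fun ω hw => lt_of_le_of_lt h hw)
  have hFanti : ∀ {v w : ℝ}, v ≤ w →
      (P {ω | W ω * X ω > w}).toReal ≤ (P {ω | W ω * X ω > v}).toReal := fun {v w} h =>
    ENNReal.toReal_mono (measure_ne_top P _)
      (measure_mono fun ω hw => lt_of_le_of_lt h hw)
  -- measurability of the lintegral integrand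
  have hTm : ∀ u : ℝ, Measurable fun x : ℝ => P {ω | W ω > u / x} := by
    intro u
    have h1 : Antitone fun t : ℝ => P {ω | W ω > t} := fun s t hst =>
      measure_mono fun ω h => lt_of_le_of_lt hst h
    exact h1.measurable.comp (measurable_const.div measurable_id)
  -- Bochner integral = toReal of lintegral
  have hGL : ∀ u : ℝ,
      (∫ x in Set.Icc (u ^ (-ε)) (u ^ (1 - ε)), (P {ω | W ω > u / x}).toReal
        ∂(Measure.map X P))
      = (∫⁻ x in Set.Icc (u ^ (-ε)) (u ^ (1 - ε)), P {ω | W ω > u / x}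
          ∂(Measure.map X P)).toReal := fun u =>
    integral_toReal ((hTm u).aemeasurable) (ae_of_all _ fun x => measure_lt_top P _)
  -- main eventual estimate
  have Hmain : ∀ η : ℝ, 0 < η → η < 1 → ∀ᶠ u : ℝ in atTop,
      (1 - η) * (1 - η) ≤
        (P {ω | W ω * X ω > u * (1 + u ^ (-δ))}).toReal /
          (P {ω | W ω * X ω > u}).toReal := by
    intro η hη0 hη1
    have h1 : ∀ᶠ v : ℝ in atTop, 1 - η ≤
        (P {ω | W ω > v * (1 + v ^ (-δ'))}).toReal / (P {ω | W ω > v}).toReal :=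
      hProdTail.eventually (eventually_ge_nhds (by linarith))
    rw [eventually_atTop] at h1
    obtain ⟨V, hV⟩ := h1
    have hVkey : ∀ v : ℝ, V ≤ v →
        (1 - η) * (P {ω | W ω > v}).toReal ≤
          (P {ω | W ω > v * (1 + v ^ (-δ'))}).toReal := by
      intro v hv
      have h := hV v hv
      rcases eq_or_lt_of_le (ENNReal.toReal_nonneg : (0:ℝ) ≤ (P {ω | W ω > v}).toReal)
        with h0 | h0
      · rw [← h0, div_zero] at h
        linarith
      · exact (le_div_iff₀ h0).mp h
    have h2 : ∀ᶠ u : ℝ in atTop,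
        (P {ω | W ω * X ω > u}).toReal /
          (∫ x in Set.Icc (u ^ (-ε)) (u ^ (1 - ε)), (P {ω | W ω > u / x}).toReal
            ∂(Measure.map X P)) ∈ Set.Icc (1 - η) (1 + η) :=
      hrep.eventually (Icc_mem_nhds (by linarith) (by linarith))
    have h3 : ∀ᶠ u : ℝ in atTop, V ≤ u ^ ε :=
      (tendsto_rpow_atTop hε).eventually_ge_atTop V
    filter_upwards [h2, h3, eventually_ge_atTop (1:ℝ)] with u hrepu huV hu1
    have hu0 : (0:ℝ) < u := by linarith
    set a : ℝ := u ^ (-ε) with hadef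
    set b : ℝ := u ^ (1 - ε) with hbdef
    have ha0 : 0 < a := Real.rpow_pos_of_pos hu0 _
    set u' : ℝ := u * (1 + u ^ (-δ)) with hu'def
    -- pointwise comparison on the interval
    have hpoint : ∀ x ∈ Set.Icc a b,
        ENNReal.ofReal (1 - η) * P {ω | W ω > u / x} ≤ P {ω | W ω > u' / x} := by
      intro x hx
      have hx0 : 0 < x := lt_of_lt_of_le ha0 hx.1
      have hb0 : (0:ℝ) < b := lt_of_lt_of_le hx0 hx.2
      have hvpos : 0 < u / x := div_pos hu0 hx0
      have hvlb : u ^ ε ≤ u / x := by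
        have he : u / b = u ^ ε := by
          rw [hbdef]
          calc u / u ^ (1 - ε) = u ^ (1:ℝ) / u ^ (1 - ε) := by rw [Real.rpow_one]
            _ = u ^ (1 - (1 - ε)) := (Real.rpow_sub hu0 _ _).symm
            _ = u ^ ε := by norm_num
        rw [← he]
        exact div_le_div_of_nonneg_left hu0.le hx0 hx.2
      have hvub : u / x ≤ u ^ (1 + ε) := by
        have he : u / a = u ^ (1 + ε) := by
          rw [hadef]
          calc u / u ^ (-ε) = u ^ (1:ℝ) / u ^ (-ε) := by rw [Real.rpow_one]
            _ = u ^ (1 - (-ε)) := (Real.rpow_sub hu0 _ _).symm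
            _ = u ^ (1 + ε) := by norm_num
        rw [← he]
        exact div_le_div_of_nonneg_left hu0.le ha0 hx.1
      have hVv : V ≤ u / x := le_trans huV hvlb
      have hkey : u ^ (-δ) ≤ (u / x) ^ (-δ') := by
        have e1 : (u / x) ^ δ' ≤ u ^ δ :=
          calc (u / x) ^ δ' ≤ (u ^ (1 + ε)) ^ δ' :=
                Real.rpow_le_rpow hvpos.le hvub hδ'.le
            _ = u ^ ((1 + ε) * δ') := (Real.rpow_mul hu0.le _ _).symm
            _ ≤ u ^ δ := Real.rpow_le_rpow_of_exponent_le hu1 hδ.le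
        rw [Real.rpow_neg hu0.le, Real.rpow_neg hvpos.le]
        exact inv_anti₀ (Real.rpow_pos_of_pos hvpos _) e1
      have hline : u' / x ≤ (u / x) * (1 + (u / x) ^ (-δ')) := by
        have he : u' / x = (u / x) * (1 + u ^ (-δ)) := by
          rw [hu'def, mul_div_right_comm]
        rw [he]
        exact mul_le_mul_of_nonneg_left (by linarith) hvpos.le
      have hreal : (1 - η) * (P {ω | W ω > u / x}).toReal ≤
          (P {ω | W ω > u' / x}).toReal :=
        le_trans (hVkey (u / x) hVv) (hTanti hline)
      calc ENNReal.ofReal (1 - η) * P {ω | W ω > u / x}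
          = ENNReal.ofReal ((1 - η) * (P {ω | W ω > u / x}).toReal) := by
            rw [ENNReal.ofReal_mul (by linarith), ENNReal.ofReal_toReal (measure_ne_top P _)]
        _ ≤ P {ω | W ω > u' / x} := ENNReal.ofReal_le_of_le_toReal hreal
    -- integrate the pointwise bound
    have hGLle : ENNReal.ofReal (1 - η) *
        (∫⁻ x in Set.Icc a b, P {ω | W ω > u / x} ∂(Measure.map X P))
        ≤ ∫⁻ x in Set.Icc a b, P {ω | W ω > u' / x} ∂(Measure.map X P) := by
      rw [← lintegral_const_mul' _ _ ENNReal.ofReal_ne_top]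
      exact lintegral_mono_ae ((ae_restrict_mem measurableSet_Icc).mono fun x hx =>
        hpoint x hx)
    have h5 : (∫⁻ x in Set.Icc a b, P {ω | W ω > u' / x} ∂(Measure.map X P))
        ≤ P {ω | W ω * X ω > u'} := by
      rw [← key_id P X W hXmeas hWmeas hindXW u' a b ha0]
      exact measure_mono fun ω h => h.1
    -- notation for the three real quantities
    set Fu : ℝ := (P {ω | W ω * X ω > u}).toReal with hFudef
    set Fu' : ℝ := (P {ω | W ω * X ω > u'}).toReal with hFu'def
    set Gu : ℝ := (∫ x in Set.Icc (u ^ (-ε)) (u ^ (1 - ε)), (P {ω | W ω > u / x}).toReal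
        ∂(Measure.map X P)) with hGudef
    have hGuL : Gu = (∫⁻ x in Set.Icc a b, P {ω | W ω > u / x} ∂(Measure.map X P)).toReal :=
      hGL u
    have core : (1 - η) * Gu ≤ Fu' := by
      have h6 : (ENNReal.ofReal (1 - η) *
          (∫⁻ x in Set.Icc a b, P {ω | W ω > u / x} ∂(Measure.map X P))).toReal
          ≤ Fu' :=
        ENNReal.toReal_mono (measure_ne_top P _) (le_trans hGLle h5)
      rw [ENNReal.toReal_mul, ENNReal.toReal_ofReal (by linarith)] at h6
      rw [hGuL]
      exact h6
    have hGnn : 0 ≤ Gu := by rw [hGuL]; exact ENNReal.toReal_nonneg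
    have hGu0 : 0 < Gu := by
      rcases eq_or_lt_of_le hGnn with h0 | h0
      · exfalso
        have := hrepu.1
        rw [← h0, div_zero] at this
        linarith
      · exact h0
    have hFu_ge : (1 - η) * Gu ≤ Fu := (le_div_iff₀ hGu0).mp hrepu.1
    have hFu_le : Fu ≤ (1 + η) * Gu := (div_le_iff₀ hGu0).mp hrepu.2
    have hFu0 : 0 < Fu := lt_of_lt_of_le (by nlinarith) hFu_ge
    rw [le_div_iff₀ hFu0]
    have h1η : (0:ℝ) ≤ 1 - η := by linarith
    have hstep1 : (1 - η) * (1 - η) * Fu ≤ (1 - η) * (1 - η) * ((1 + η) * Gu) :=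
      mul_le_mul_of_nonneg_left hFu_le (mul_nonneg h1η h1η)
    have hstep2 : (1 - η) * (1 - η) * ((1 + η) * Gu) ≤ (1 - η) * Gu := by
      nlinarith [mul_nonneg (mul_nonneg h1η hGu0.le) (mul_nonneg hη0.le hη0.le)]
    linarith [core]
  -- coboundedness
  have hcobdd : IsCoboundedUnder (· ≥ ·) atTop (fun u : ℝ =>
      (P {ω | W ω * X ω > u * (1 + u ^ (-δ))}).toReal /
        (P {ω | W ω * X ω > u}).toReal) := by
    apply Filter.IsBoundedUnder.isCoboundedUnder_ge
    apply isBoundedUnder_of_eventually_le (a := (1:ℝ))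
    filter_upwards [eventually_ge_atTop (0:ℝ)] with u hu
    by_cases hF : (P {ω | W ω * X ω > u}).toReal = 0
    · rw [hF, div_zero]; norm_num
    · refine div_le_one_of_le₀ ?_ ENNReal.toReal_nonneg
      refine hFanti ?_
      nlinarith [Real.rpow_nonneg hu (-δ)]
  have key : ∀ c : ℝ, c < 1 → c ≤ liminf (fun u : ℝ =>
      (P {ω | W ω * X ω > u * (1 + u ^ (-δ))}).toReal /
        (P {ω | W ω * X ω > u}).toReal) atTop := by
    intro c hc
    by_cases hc0 : c ≤ 0
    · refine le_trans hc0 (le_liminf_of_le hcobdd ?_)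
      exact Eventually.of_forall fun u => div_nonneg ENNReal.toReal_nonneg ENNReal.toReal_nonneg
    · push_neg at hc0
      set η : ℝ := min (1/2) ((1 - c)/2) with hηdef
      have hη0 : 0 < η := lt_min (by norm_num) (by linarith)
      have hη1 : η < 1 := lt_of_le_of_lt (min_le_left _ _) (by norm_num)
      have h2η : 2 * η ≤ 1 - c := by
        have := min_le_right (1/2 : ℝ) ((1 - c)/2)
        have : η ≤ (1 - c)/2 := this
        linarith
      have hce : c ≤ (1 - η) * (1 - η) := by nlinarith
      exact le_trans hce (le_liminf_of_le hcobdd (Hmain η hη0 hη1))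
  refine le_of_forall_lt fun c hc => ?_
  exact lt_of_lt_of_le (show c < (c + 1)/2 by linarith)
    (key _ (by linarith))
end
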